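/- arXiv:2003.07511 — 4 statements merged into one kernel-verified Lean document; each statement's English description precedes it below -/
import Mathlib

section
/- Let S be a Seidel matrix of order n with smallest eigenvalue exactly −5. If the switching class of S contains a simple graph G whose adjacency matrix has spectral radius ρ(G) ≤ 2, then rk(S + 5I) ≥ 2n/3 + 1. -/
open Matrix

/-- A Seidel matrix: symmetric, zero diagonal, off-diagonal entries `±1`. -/
def IsSeidel {n : ℕ} (S : Matrix (Fin n) (Fin n) ℝ) : Prop :=
  S.IsSymm ∧ (∀ i, S i i = 0) ∧ ∀ i j, i ≠ j → S i j = 1 ∨ S i j = -1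

/-- Smallest eigenvalue of a real symmetric matrix (junk value `0` if not Hermitian). -/
noncomputable def minEig {m : Type*} [Fintype m] [DecidableEq m] (A : Matrix m m ℝ) : ℝ := by
  classical
  exact if hA : A.IsHermitian then ⨅ i, hA.eigenvalues i else 0

/-- Largest eigenvalue of a real symmetric matrix (junk value `0` if not Hermitian). -/
noncomputable def maxEig {m : Type*} [Fintype m] [DecidableEq m] (A : Matrix m m ℝ) : ℝ := by
  classical
  exact if hA : A.IsHermitian then ⨆ i, hA.eigenvalues i else 0

/-- The Seidel matrix of a simple graph `G`, i.e. `J - I - 2A(G)`: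
zero diagonal, `-1` on adjacent pairs, `1` on distinct non-adjacent pairs. -/
noncomputable def seidelOf {V : Type*} [Fintype V] (G : SimpleGraph V) : Matrix V V ℝ := by
  classical
  exact Matrix.of fun i j => if i = j then 0 else if G.Adj i j then -1 else 1

/-- Smallest eigenvalue of the Seidel matrix of a finite graph. -/
noncomputable def minSeidelEig {V : Type*} [Finite V] (G : SimpleGraph V) : ℝ := by
  classical
  letI := Fintype.ofFinite V
  exact minEig (seidelOf G)

/-- Spectral radius (largest adjacency eigenvalue) of a finite graph. -/
noncomputable def specRad {V : Type*} [Finite V] (G : SimpleGraph V) : ℝ := by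
  classical
  letI := Fintype.ofFinite V
  exact maxEig (G.adjMatrix ℝ)

/-- Switching equivalence: `T = D S D` for some diagonal `±1` matrix `D`. -/
def SwEquiv {n : ℕ} (S T : Matrix (Fin n) (Fin n) ℝ) : Prop :=
  ∃ ε : Fin n → ℝ, (∀ i, ε i = 1 ∨ ε i = -1) ∧
    T = Matrix.diagonal ε * S * Matrix.diagonal ε

/-- The switching graph of a Seidel matrix `S`: the graph on `2n` vertices whose Seidel
matrix is the block matrix `((S, I - S), (I - S, S))`, adjacency given by entries `-1`. -/
def switchGraph {n : ℕ} (S : Matrix (Fin n) (Fin n) ℝ) : SimpleGraph (Fin n ⊕ Fin n) :=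
  SimpleGraph.fromRel fun x y => Matrix.fromBlocks S (1 - S) (1 - S) S x y = -1

/-- Independence number of a graph. -/
noncomputable def indepNum {V : Type*} (G : SimpleGraph V) : ℕ := Gᶜ.cliqueNum

/-- The graph consisting of `t` disjoint copies of `K₂`. -/
def nK2 (t : ℕ) : SimpleGraph (Fin t × Fin 2) :=
  SimpleGraph.fromRel fun p q => p.1 = q.1

/-! ### Auxiliary lemmas -/

lemma isHermitianReal {m : Type*} {M : Matrix m m ℝ} (h : M.IsSymm) :
    M.IsHermitian := by
  rw [Matrix.IsHermitian, Matrix.conjTranspose]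
  ext i j; simpa [Matrix.map_apply, starRingEnd_apply] using congrFun (congrFun h i) j

lemma maxEig_eq {m : Type*} [Fintype m] [DecidableEq m] {A : Matrix m m ℝ} (hA : A.IsHermitian) :
    maxEig A = ⨆ i, hA.eigenvalues i := by
  unfold maxEig; exact dif_pos hA

lemma minEig_eq {m : Type*} [Fintype m] [DecidableEq m] {A : Matrix m m ℝ} (hA : A.IsHermitian) :
    minEig A = ⨅ i, hA.eigenvalues i := by
  unfold minEig; exact dif_pos hA

lemma eig_le_maxEig {m : Type*} [Fintype m] [DecidableEq m] {A : Matrix m m ℝ}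
    (hA : A.IsHermitian) (i : m) : hA.eigenvalues i ≤ maxEig A := by
  rw [maxEig_eq hA]
  exact le_ciSup (Set.Finite.bddAbove (Set.finite_range _)) i

/-- Rayleigh quotient bound for real symmetric matrices. -/
lemma rayleigh {m : Type*} [Fintype m] [DecidableEq m] {A : Matrix m m ℝ} (hA : A.IsHermitian)
    (x : m → ℝ) : x ⬝ᵥ A *ᵥ x ≤ maxEig A * (x ⬝ᵥ x) := by
  classical
  set U : Matrix m m ℝ := (hA.eigenvectorUnitary : Matrix m m ℝ) with hU
  have hsU : star U = Uᵀ := by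
    ext i j; simp [Matrix.star_apply]
  have hUU : U * Uᵀ = 1 := by
    rw [← hsU]; exact mem_unitaryGroup_iff.mp hA.eigenvectorUnitary.2
  set y : m → ℝ := Uᵀ *ᵥ x with hy
  have hdiag : Matrix.diagonal ((RCLike.ofReal : ℝ → ℝ) ∘ hA.eigenvalues)
      = Matrix.diagonal hA.eigenvalues := by simp
  have h1 : x ⬝ᵥ A *ᵥ x = ∑ j, hA.eigenvalues j * (y j)^2 := by
    conv_lhs => rw [hA.spectral_theorem, Unitary.conjStarAlgAut_apply, hsU, hdiag]
    rw [← Matrix.mulVec_mulVec, ← Matrix.mulVec_mulVec, dotProduct_mulVec,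
      ← Matrix.mulVec_transpose]
    simp only [dotProduct, Matrix.mulVec_diagonal, hy]
    exact Finset.sum_congr rfl fun j _ => by ring
  have h2 : x ⬝ᵥ x = ∑ j, (y j)^2 := by
    have : y ⬝ᵥ y = x ⬝ᵥ x := by
      rw [hy]
      conv_lhs => rw [show (Uᵀ *ᵥ x) ⬝ᵥ (Uᵀ *ᵥ x) = (x ᵥ* U) ⬝ᵥ (Uᵀ *ᵥ x) by
        rw [Matrix.mulVec_transpose]]
      rw [← dotProduct_mulVec, Matrix.mulVec_mulVec, hUU, Matrix.one_mulVec]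
    rw [← this]; simp [dotProduct, pow_two]
  rw [h1, h2, Finset.mul_sum]
  apply Finset.sum_le_sum
  intro j _
  exact mul_le_mul_of_nonneg_right (eig_le_maxEig hA j) (sq_nonneg _)

/-- A real symmetric matrix has an eigenvector for its least eigenvalue. -/
lemma exists_minEig_vector {m : Type*} [Fintype m] [DecidableEq m] [Nonempty m]
    {A : Matrix m m ℝ} (hA : A.IsHermitian) :
    ∃ x : m → ℝ, x ≠ 0 ∧ A *ᵥ x = minEig A • x := by
  obtain ⟨i₀, hi₀⟩ := Finite.exists_min hA.eigenvalues
  have hm : minEig A = hA.eigenvalues i₀ := by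
    rw [minEig_eq hA]
    exact le_antisymm (ciInf_le (Set.Finite.bddBelow (Set.finite_range _)) i₀) (le_ciInf hi₀)
  refine ⟨⇑(hA.eigenvectorBasis i₀), ?_, ?_⟩
  · intro h
    apply hA.eigenvectorBasis.orthonormal.ne_zero i₀
    apply PiLp.ext
    intro j
    exact congrFun h j
  · rw [hm, hA.mulVec_eigenvectorBasis]

/-- If `S` is a Seidel matrix of order `n` with smallest eigenvalue exactly `-5`
whose switching class contains a graph `G` with spectral radius `ρ(G) ≤ 2`,
then `rk(S + 5I) ≥ 2n/3 + 1`. -/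
theorem stmt_9 {n : ℕ} (S : Matrix (Fin n) (Fin n) ℝ) (hS : IsSeidel S)
    (hmin : minEig S = -5)
    (G : SimpleGraph (Fin n)) (hsw : SwEquiv S (seidelOf G))
    (hρ : specRad G ≤ 2) :
    2 * (n : ℝ) / 3 + 1 ≤ ((S + (5 : ℝ) • 1).rank : ℝ) := by
  classical
  obtain ⟨ε, hε, hDSD⟩ := hsw
  set D : Matrix (Fin n) (Fin n) ℝ := Matrix.diagonal ε with hD
  have hε2 : ∀ i, ε i * ε i = 1 := fun i => by rcases hε i with h | h <;> rw [h] <;> norm_num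
  have hεne : ∀ i, ε i ≠ 0 := fun i => by rcases hε i with h | h <;> rw [h] <;> norm_num
  have hD2 : D * D = 1 := by
    rw [hD, Matrix.diagonal_mul_diagonal,
      show (fun i => ε i * ε i) = fun _ : Fin n => (1:ℝ) from funext hε2]
    exact Matrix.diagonal_one
  have hDdet : IsUnit D.det := by
    rw [hD, Matrix.det_diagonal]
    exact isUnit_iff_ne_zero.mpr (Finset.prod_ne_zero_iff.mpr fun i _ => hεne i)
  set A : Matrix (Fin n) (Fin n) ℝ := G.adjMatrix ℝ with hA
  have hAH : A.IsHermitian := isHermitianReal (SimpleGraph.isSymm_adjMatrix G)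
  have hAnn : ∀ i j, 0 ≤ A i j := by
    intro i j; rw [hA]; by_cases h : G.Adj i j <;> simp [h]
  have hA01 : ∀ i j, A i j * A i j = A i j := by
    intro i j; rw [hA]; by_cases h : G.Adj i j <;> simp [h]
  have hAsymm : ∀ i j, A j i = A i j := fun i j => by
    conv_lhs => rw [← hAH]
    simp [Matrix.conjTranspose_apply]
  have hAdiag : ∀ i, A i i = 0 := by intro i; simp [hA]
  -- transfer the spectral radius bound
  have hspec : maxEig A ≤ 2 := by
    have : specRad G = maxEig A := by
      unfold specRad
      congr! 1
    rwa [this] at hρ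
  have hray : ∀ x : Fin n → ℝ, x ⬝ᵥ A *ᵥ x ≤ 2 * (x ⬝ᵥ x) := by
    intro x
    have h1 := rayleigh hAH x
    have h2 : (0:ℝ) ≤ x ⬝ᵥ x := Finset.sum_nonneg fun i _ => mul_self_nonneg _
    nlinarith
  -- the conjugated matrix
  set J : Matrix (Fin n) (Fin n) ℝ := Matrix.of (fun _ _ => (1:ℝ)) with hJ
  set N : Matrix (Fin n) (Fin n) ℝ := (2:ℝ) • 1 - A with hN
  set M : Matrix (Fin n) (Fin n) ℝ := seidelOf G + (5:ℝ) • 1 with hM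
  have hMJN : M = J + (2:ℝ) • N := by
    rw [hM, hJ, hN]
    ext i j
    by_cases h : i = j
    · subst h
      simp [seidelOf, Matrix.one_apply, hAdiag i]
      norm_num
    · by_cases hadj : G.Adj i j <;>
        simp [seidelOf, Matrix.one_apply, h, hadj, hA] <;> norm_num
  -- quadratic forms
  have qJ : ∀ x : Fin n → ℝ, x ⬝ᵥ J *ᵥ x = (∑ i, x i)^2 := by
    intro x
    simp only [hJ, Matrix.mulVec, dotProduct, Matrix.of_apply, one_mul, pow_two]
    rw [← Finset.sum_mul]
  have qJ0 : ∀ x : Fin n → ℝ, 0 ≤ x ⬝ᵥ J *ᵥ x := fun x => (qJ x) ▸ sq_nonneg _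
  have qNval : ∀ x : Fin n → ℝ, x ⬝ᵥ N *ᵥ x = 2 * (x ⬝ᵥ x) - x ⬝ᵥ A *ᵥ x := by
    intro x
    rw [hN, Matrix.sub_mulVec, dotProduct_sub, Matrix.smul_mulVec, Matrix.one_mulVec,
      dotProduct_smul]
    simp [smul_eq_mul]
  have qN0 : ∀ x : Fin n → ℝ, 0 ≤ x ⬝ᵥ N *ᵥ x := by
    intro x; rw [qNval x]; linarith [hray x]
  have hAT : Aᵀ = A := by ext i j; exact hAsymm i j
  have hNH : N.IsHermitian := by
    apply isHermitianReal
    rw [hN, Matrix.IsSymm, Matrix.transpose_sub, Matrix.transpose_smul, Matrix.transpose_one, hAT]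
  have hNpsd : N.PosSemidef := .of_dotProduct_mulVec_nonneg hNH fun x => by simpa using qN0 x
  -- kernel membership criterion
  have kerSub : ∀ x : Fin n → ℝ, M *ᵥ x = 0 → N *ᵥ x = 0 ∧ (∑ i, x i) = 0 := by
    intro x hx
    have h0 : x ⬝ᵥ M *ᵥ x = 0 := by rw [hx, dotProduct_zero]
    have hsplit : x ⬝ᵥ M *ᵥ x = x ⬝ᵥ J *ᵥ x + 2 * (x ⬝ᵥ N *ᵥ x) := by
      rw [hMJN, Matrix.add_mulVec, dotProduct_add, Matrix.smul_mulVec, dotProduct_smul]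
      simp [smul_eq_mul]
    have hNz : x ⬝ᵥ N *ᵥ x = 0 := by
      have := qJ0 x; have := qN0 x; linarith [hsplit ▸ h0]
    have hJz : x ⬝ᵥ J *ᵥ x = 0 := by linarith [hsplit ▸ h0]
    constructor
    · exact (hNpsd.dotProduct_mulVec_zero_iff x).mp (by simpa using hNz)
    · have := (qJ x) ▸ hJz
      exact pow_eq_zero_iff (by norm_num) |>.mp this
  -- a nonzero kernel vector, coming from the eigenvalue -5 of S
  have hSH : S.IsHermitian := isHermitianReal hS.1
  have hn : n ≠ 0 := by
    intro h
    subst h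
    rw [minEig_eq hSH, Real.iInf_of_isEmpty] at hmin
    norm_num at hmin
  haveI : Nonempty (Fin n) := Fin.pos_iff_nonempty.mp (Nat.pos_of_ne_zero hn)
  obtain ⟨x, hx0, hxe⟩ := exists_minEig_vector hSH
  have hxe' : (S + (5:ℝ) • 1) *ᵥ x = 0 := by
    rw [Matrix.add_mulVec, hxe, hmin, Matrix.smul_mulVec, Matrix.one_mulVec]
    ext i; simp
  have hMD : M = D * (S + (5:ℝ) • 1) * D := by
    have h5 : D * ((5:ℝ) • 1) * D = (5:ℝ) • 1 := by
      rw [Matrix.mul_smul, Matrix.mul_one, Matrix.smul_mul, hD2]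
    rw [hM, hDSD, Matrix.mul_add, Matrix.add_mul, h5]
  set x₀ : Fin n → ℝ := D *ᵥ x with hx₀def
  have hx₀ : M *ᵥ x₀ = 0 := by
    rw [hMD, hx₀def, Matrix.mulVec_mulVec, Matrix.mul_assoc, Matrix.mul_assoc, hD2,
      Matrix.mul_one, ← Matrix.mulVec_mulVec, hxe', Matrix.mulVec_zero]
  have hx₀0 : x₀ ≠ 0 := by
    intro h
    apply hx0
    ext i
    have : x₀ i = 0 := by rw [h]; rfl
    rw [hx₀def, hD] at this
    simp [Matrix.mulVec_diagonal] at this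
    rcases this with h' | h'
    · exact absurd h' (hεne i)
    · exact h'
  -- rank transfer
  have hrank : (S + (5:ℝ) • 1).rank = M.rank := by
    rw [hMD, Matrix.rank_mul_eq_left_of_isUnit_det D _ hDdet,
      Matrix.rank_mul_eq_right_of_isUnit_det D _ hDdet]
  -- submodules
  set K : Submodule ℝ (Fin n → ℝ) := LinearMap.ker M.mulVecLin with hK
  set E : Submodule ℝ (Fin n → ℝ) := LinearMap.ker N.mulVecLin with hE
  have hKE : K ≤ E := by
    intro v hv
    rw [hE, LinearMap.mem_ker, Matrix.mulVecLin_apply]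
    exact (kerSub v (by rwa [hK, LinearMap.mem_ker, Matrix.mulVecLin_apply] at hv)).1
  set y : Fin n → ℝ := fun i => |x₀ i| with hy
  have hx₀K : x₀ ∈ K := by rw [hK, LinearMap.mem_ker, Matrix.mulVecLin_apply]; exact hx₀
  have hyE : y ∈ E := by
    have hNx₀ : N *ᵥ x₀ = 0 := (kerSub x₀ hx₀).1
    have hAx₀ : x₀ ⬝ᵥ A *ᵥ x₀ = 2 * (x₀ ⬝ᵥ x₀) := by
      have := qNval x₀
      rw [hNx₀, dotProduct_zero] at this
      linarith
    have hyy : y ⬝ᵥ y = x₀ ⬝ᵥ x₀ := by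
      simp only [dotProduct, hy, abs_mul_abs_self]
    have hAyy : x₀ ⬝ᵥ A *ᵥ x₀ ≤ y ⬝ᵥ A *ᵥ y := by
      simp only [dotProduct, Matrix.mulVec, Finset.mul_sum]
      apply Finset.sum_le_sum
      intro i _
      apply Finset.sum_le_sum
      intro j _
      calc x₀ i * (A i j * x₀ j) ≤ |x₀ i * (A i j * x₀ j)| := le_abs_self _
        _ = |x₀ i| * (A i j * |x₀ j|) := by
            rw [abs_mul, abs_mul, abs_of_nonneg (hAnn i j)]
    have hqNy : y ⬝ᵥ N *ᵥ y = 0 := by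
      have h1 : y ⬝ᵥ N *ᵥ y ≤ 0 := by rw [qNval y, hyy]; linarith
      exact le_antisymm h1 (qN0 y)
    rw [hE, LinearMap.mem_ker, Matrix.mulVecLin_apply]
    exact (hNpsd.dotProduct_mulVec_zero_iff y).mp (by simpa using hqNy)
  have hyK : y ∉ K := by
    intro hyK
    have hsum := (kerSub y (by rwa [hK, LinearMap.mem_ker, Matrix.mulVecLin_apply] at hyK)).2
    apply hx₀0
    ext i
    have hnn : ∀ i ∈ Finset.univ, (0:ℝ) ≤ |x₀ i| := fun i _ => abs_nonneg _
    have h0 : |x₀ i| = 0 :=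
      (Finset.sum_eq_zero_iff_of_nonneg hnn).mp hsum i (Finset.mem_univ i)
    simpa using abs_eq_zero.mp h0
  have hKltE : K < E := lt_of_le_of_ne hKE (by
    intro hEq
    rw [← hEq] at hyE
    exact hyK hyE)
  have hdimKE : Module.finrank ℝ K < Module.finrank ℝ E :=
    Submodule.finrank_lt_finrank_of_lt hKltE
  -- Euclidean transfer of E
  set e : EuclideanSpace ℝ (Fin n) ≃ₗ[ℝ] (Fin n → ℝ) := WithLp.linearEquiv 2 ℝ (Fin n → ℝ)
    with he
  set E' : Submodule ℝ (EuclideanSpace ℝ (Fin n)) := E.comap e.toLinearMap with hE'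
  have hfr : Module.finrank ℝ E' = Module.finrank ℝ E := by
    rw [hE', Submodule.comap_equiv_eq_map_symm]
    exact (LinearEquiv.finrank_map_eq e.symm E)
  set b := stdOrthonormalBasis ℝ E' with hb
  set mE := Module.finrank ℝ E' with hmE
  set V : Matrix (Fin n) (Fin mE) ℝ :=
    Matrix.of (fun i k => e ((b k : EuclideanSpace ℝ (Fin n))) i) with hV
  have hVtV : Vᵀ * V = 1 := by
    ext k l
    have horth := b.orthonormal
    rw [orthonormal_iff_ite] at horth
    have h1 := horth k l
    rw [Submodule.coe_inner, PiLp.inner_apply] at h1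
    simp only [RCLike.inner_apply, starRingEnd_apply, star_trivial] at h1
    simp only [Matrix.mul_apply, Matrix.transpose_apply, hV, Matrix.of_apply, Matrix.one_apply]
    convert h1 using 1
    exact Finset.sum_congr rfl fun j _ => mul_comm _ _
  have hNV : N * V = 0 := by
    ext i k
    have hmem : (b k : EuclideanSpace ℝ (Fin n)) ∈ E' := (b k).2
    have hmem' := Submodule.mem_comap.mp hmem
    rw [hE, LinearMap.mem_ker, Matrix.mulVecLin_apply] at hmem'
    exact congrFun hmem' i
  have hAV : A * V = (2:ℝ) • V := by
    have h0 : ((2:ℝ) • 1 - A) * V = 0 := by rw [← hN]; exact hNV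
    rw [Matrix.sub_mul, sub_eq_zero, Matrix.smul_mul, Matrix.one_mul] at h0
    exact h0.symm
  set B : Matrix (Fin n) (Fin n) ℝ := A + 1 with hB
  have hBsymm : ∀ i j, B j i = B i j := by
    intro i j
    simp [hB, Matrix.add_apply, Matrix.one_apply, hAsymm i j, eq_comm]
  have hBV : B * V = (3:ℝ) • V := by
    rw [hB, Matrix.add_mul, hAV, Matrix.one_mul,
      show (3:ℝ) = 2 + 1 by norm_num, add_smul, one_smul]
  have hPV : B * (B * V) = (9:ℝ) • V := by
    rw [hBV, Matrix.mul_smul, hBV, smul_smul]; norm_num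
  have htr1 : Matrix.trace (Vᵀ * (B * (B * V))) = 9 * (mE : ℝ) := by
    rw [hPV, Matrix.mul_smul, Matrix.trace_smul, hVtV, Matrix.trace_one]
    simp [smul_eq_mul]
  have htr2 : Matrix.trace (B * B * (V * Vᵀ)) = 9 * (mE : ℝ) := by
    rw [← Matrix.mul_assoc, Matrix.trace_mul_comm, ← htr1, Matrix.mul_assoc]
  set Q : Matrix (Fin n) (Fin n) ℝ := 1 - V * Vᵀ with hQdef
  have hQT : Qᵀ = Q := by
    rw [hQdef, Matrix.transpose_sub, Matrix.transpose_one, Matrix.transpose_mul,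
      Matrix.transpose_transpose]
  have hVVT : (V * Vᵀ) * (V * Vᵀ) = V * Vᵀ := by
    rw [Matrix.mul_assoc, ← Matrix.mul_assoc Vᵀ V Vᵀ, hVtV, Matrix.one_mul]
  have hQQ : Q * Q = Q := by
    rw [hQdef, Matrix.mul_sub, Matrix.mul_one, Matrix.sub_mul, Matrix.one_mul, hVVT]
    abel
  have hQpos : ∀ v : Fin n → ℝ, 0 ≤ v ⬝ᵥ Q *ᵥ v := by
    intro v
    have h1 : v ⬝ᵥ Q *ᵥ v = (Q *ᵥ v) ⬝ᵥ (Q *ᵥ v) := by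
      conv_lhs => rw [← hQQ]
      rw [← Matrix.mulVec_mulVec, dotProduct_mulVec]
      congr 1
      rw [← Matrix.mulVec_transpose, hQT]
    rw [h1]
    exact Finset.sum_nonneg fun i _ => mul_self_nonneg _
  have htrQ : 0 ≤ Matrix.trace (B * Q * B) := by
    rw [Matrix.trace]
    apply Finset.sum_nonneg
    intro i _
    have key : (B * Q * B) i i = (fun j => B i j) ⬝ᵥ Q *ᵥ (fun j => B i j) := by
      simp only [Matrix.diag_apply, Matrix.mul_apply, dotProduct, Matrix.mulVec,
        Finset.sum_mul, Finset.mul_sum]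
      rw [Finset.sum_comm]
      apply Finset.sum_congr rfl; intro k _
      apply Finset.sum_congr rfl; intro j _
      rw [hBsymm i j]
      ring
    rw [Matrix.diag_apply, key]
    exact hQpos _
  have hBBQ : Matrix.trace (B * B * Q) = Matrix.trace (B * Q * B) := by
    rw [Matrix.mul_assoc]
    exact Matrix.trace_mul_comm B (B * Q)
  have hsplitTr : Matrix.trace (B * B) =
      Matrix.trace (B * B * (V * Vᵀ)) + Matrix.trace (B * B * Q) := by
    rw [hQdef, Matrix.mul_sub, Matrix.mul_one, Matrix.trace_sub]
    ring
  have hterm : ∀ i j, B i j * B j i = A i j + (if i = j then (1:ℝ) else 0) := by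
    intro i j
    by_cases h : i = j
    · subst h; simp [hB, Matrix.add_apply, Matrix.one_apply, hAdiag i]
    · have h' : ¬ (j = i) := fun hji => h hji.symm
      simp only [hB, Matrix.add_apply, Matrix.one_apply, if_neg h, if_neg h', add_zero]
      rw [hAsymm i j, hA01 i j]
  have hones : (∑ i, ∑ j, A i j) ≤ 2 * (n:ℝ) := by
    have hr := hray (fun _ => (1:ℝ))
    simp only [dotProduct, Matrix.mulVec, mul_one, one_mul] at hr
    simpa using hr
  have htraceBB : Matrix.trace (B * B) ≤ 3 * (n:ℝ) := by
    have h1 : Matrix.trace (B * B) = ∑ i, ∑ j, (A i j + if i = j then (1:ℝ) else 0) := by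
      rw [Matrix.trace]
      apply Finset.sum_congr rfl; intro i _
      rw [Matrix.diag_apply, Matrix.mul_apply]
      exact Finset.sum_congr rfl fun j _ => hterm i j
    have h2 : ∑ i, ∑ j, (A i j + if i = j then (1:ℝ) else 0)
        = (∑ i, ∑ j, A i j) + n := by
      simp only [Finset.sum_add_distrib]
      congr 1
      simp [Finset.sum_ite_eq]
    rw [h1, h2]
    linarith [hones]
  have hmain : 9 * (mE : ℝ) ≤ 3 * (n:ℝ) := by
    rw [← htr2]
    have := hBBQ ▸ htrQ
    linarith [hsplitTr ▸ htraceBB]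
  -- wrap up
  have hrankn : M.rank + Module.finrank ℝ K = n := by
    have h := LinearMap.finrank_range_add_finrank_ker M.mulVecLin
    rw [Module.finrank_fintype_fun_eq_card, Fintype.card_fin] at h
    rw [Matrix.rank]
    exact h
  have hd1 : Module.finrank ℝ K + 1 ≤ mE := by omega
  rw [hrank]
  have hc1 : (M.rank : ℝ) + (Module.finrank ℝ K : ℝ) = (n : ℝ) := by exact_mod_cast hrankn
  have hc2 : (Module.finrank ℝ K : ℝ) + 1 ≤ (mE : ℝ) := by exact_mod_cast hd1
  linarith
end

section
/- Let r ≥ 2, s ≥ 0, t ≥ 0 be integers with s + t ≥ 1, and let K_{1,r}(s,t) be the disjoint union of the star K_{1,r}, s isolated vertices, and t copies of K_2. Then the smallest eigenvalue of the Seidel matrix S(K_{1,r}(s,t)) satisfies λ_min(S(K_{1,r}(s,t))) ≥ −5 if and only if (r − 4)(s + 4t − 4) ≤ 36. -/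
open Matrix

/-- The star `K_{1,r}`: vertex `0` is adjacent to the `r` other vertices. -/
def starG (r : ℕ) : SimpleGraph (Fin (r + 1)) :=
  SimpleGraph.fromRel fun i _ => i = 0

/-! ### Auxiliary lemmas -/

section RayleighLemma
variable {m : Type*} [Fintype m] [DecidableEq m] {A : Matrix m m ℝ}

lemma aux_quadform_ge (hA : A.IsHermitian) (x : m → ℝ) (c : ℝ)
    (hc : ∀ i, c ≤ hA.eigenvalues i) :
    c * (x ⬝ᵥ x) ≤ x ⬝ᵥ (A *ᵥ x) := by
  classical
  set U : Matrix m m ℝ := hA.eigenvectorUnitary.1 with hU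
  have hUU : U * star U = 1 := Matrix.mem_unitaryGroup_iff.mp hA.eigenvectorUnitary.2
  set y : m → ℝ := x ᵥ* U with hy
  have hxy : star U *ᵥ x = y := by
    ext j
    simp [hy, Matrix.vecMul, Matrix.mulVec, Matrix.conjTranspose_apply, dotProduct,
      mul_comm]
  have hform : x ⬝ᵥ (A *ᵥ x) = ∑ i, hA.eigenvalues i * (y i)^2 := by
    conv_lhs => rw [hA.spectral_theorem, Unitary.conjStarAlgAut_apply]
    rw [← Matrix.mulVec_mulVec, ← Matrix.mulVec_mulVec, dotProduct_mulVec, hxy, ← hy]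
    simp [Matrix.mulVec_diagonal, dotProduct, sq]
    apply Finset.sum_congr rfl
    intro i _
    ring
  have hnorm : x ⬝ᵥ x = ∑ i, (y i)^2 := by
    have : (y ⬝ᵥ y) = x ⬝ᵥ x := by
      rw [hy]
      rw [show (x ᵥ* U) ⬝ᵥ (x ᵥ* U) = (x ᵥ* U) ⬝ᵥ (star U *ᵥ x) from by rw [hxy, hy]]
      rw [dotProduct_mulVec, Matrix.vecMul_vecMul, hUU, Matrix.vecMul_one]
    rw [← this]
    simp [dotProduct, sq]
  rw [hform, hnorm, Finset.mul_sum]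
  apply Finset.sum_le_sum
  intro i _
  exact mul_le_mul_of_nonneg_right (hc i) (sq_nonneg _)

lemma aux_eigenvalue_ge (hA : A.IsHermitian) (c : ℝ)
    (h : ∀ x : m → ℝ, c * (x ⬝ᵥ x) ≤ x ⬝ᵥ (A *ᵥ x)) (i : m) :
    c ≤ hA.eigenvalues i := by
  have hev := hA.eigenvalues_eq i
  set v : m → ℝ := ⇑(hA.eigenvectorBasis i) with hv
  have hvv : v ⬝ᵥ v = 1 := by
    have h1 := hA.eigenvectorBasis.orthonormal.1 i
    have h2 : (inner ℝ (hA.eigenvectorBasis i) (hA.eigenvectorBasis i) : ℝ) = 1 := by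
      rw [real_inner_self_eq_norm_sq, h1, one_pow]
    rw [PiLp.inner_apply] at h2
    simpa [dotProduct, hv, sq] using h2
  have hev' : hA.eigenvalues i = v ⬝ᵥ (A *ᵥ v) := by
    simpa using hev
  calc c = c * (v ⬝ᵥ v) := by rw [hvv, mul_one]
    _ ≤ v ⬝ᵥ (A *ᵥ v) := h v
    _ = hA.eigenvalues i := hev'.symm

lemma aux_minEig_ge_iff [Nonempty m] (hA : A.IsHermitian) (c : ℝ) :
    c ≤ minEig A ↔ ∀ x : m → ℝ, c * (x ⬝ᵥ x) ≤ x ⬝ᵥ (A *ᵥ x) := by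
  rw [minEig, dif_pos hA]
  constructor
  · intro h x
    exact aux_quadform_ge hA x c
      (fun i => le_trans h (ciInf_le (Set.Finite.bddBelow (Set.finite_range _)) i))
  · intro h
    exact le_ciInf (aux_eigenvalue_ge hA c h)

end RayleighLemma

lemma aux_minEig_irrel {m : Type*} (F1 F2 : Fintype m) (D1 : @DecidableEq m) (D2 : DecidableEq m)
    (A : Matrix m m ℝ) : @minEig m F1 D1 A = @minEig m F2 D2 A := by
  cases Subsingleton.elim F1 F2
  have : D1 = D2 := by
    funext a b
    exact Subsingleton.elim _ _
  cases this
  rfl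

lemma aux_seidelOf_irrel {V : Type*} (F1 F2 : Fintype V) (G : SimpleGraph V) :
    @seidelOf V F1 G = @seidelOf V F2 G := by
  cases Subsingleton.elim F1 F2
  rfl

lemma aux_minSeidelEig_eq {V : Type*} [F : Fintype V] [D : DecidableEq V] (G : SimpleGraph V) :
    minSeidelEig G = minEig (seidelOf G) := by
  unfold minSeidelEig
  rw [aux_seidelOf_irrel (Fintype.ofFinite V) F G]
  exact aux_minEig_irrel _ _ _ _ _

lemma aux_seidelOf_isHermitian {V : Type*} [Fintype V] (G : SimpleGraph V) :
    (seidelOf G).IsHermitian := by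
  classical
  unfold Matrix.IsHermitian
  ext i j
  simp only [seidelOf, Matrix.conjTranspose_apply, Matrix.of_apply, star_trivial]
  by_cases h : j = i
  · simp [h]
  · have h' : ¬ i = j := fun hh => h hh.symm
    by_cases ha : G.Adj j i
    · simp [h, h', ha, ha.symm]
    · have ha' : ¬ G.Adj i j := fun hh => ha hh.symm
      simp [h, h', ha, ha']

open Classical in
lemma aux_seidel_quadform {V : Type*} [Fintype V] (G : SimpleGraph V) (x : V → ℝ) :
    x ⬝ᵥ (seidelOf G *ᵥ x) =
      (∑ v, x v)^2 - (∑ v, (x v)^2)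
        - 2 * ∑ v, ∑ w, (if G.Adj v w then x v * x w else 0) := by
  have key : ∀ v w : V, x v * (seidelOf G v w * x w)
      = x v * x w - (if v = w then x v * x w else 0)
        - 2 * (if G.Adj v w then x v * x w else 0) := by
    intro v w
    by_cases h : v = w
    · subst h
      simp [seidelOf, G.irrefl]
    · by_cases ha : G.Adj v w
      · simp only [seidelOf, Matrix.of_apply, if_neg h, if_pos ha, h, ha, if_true, if_false]
        ring
      · simp only [seidelOf, Matrix.of_apply, if_neg h, if_neg ha, h, ha, if_false]
        ring
  have lhs_eq : x ⬝ᵥ (seidelOf G *ᵥ x) = ∑ v, ∑ w, x v * (seidelOf G v w * x w) := by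
    simp [dotProduct, Matrix.mulVec, Finset.mul_sum]
  have h2 : (∑ v, (x v)^2) = ∑ v : V, ∑ w : V, (if v = w then x v * x w else 0) := by
    refine Finset.sum_congr rfl fun v _ => ?_
    rw [Finset.sum_ite_eq Finset.univ v (fun w => x v * x w)]
    simp [sq]
  rw [lhs_eq, sq, Finset.sum_mul_sum, h2, Finset.mul_sum,
    ← Finset.sum_sub_distrib, ← Finset.sum_sub_distrib]
  refine Finset.sum_congr rfl fun v _ => ?_
  simp only [key]
  rw [Finset.sum_sub_distrib, Finset.sum_sub_distrib, Finset.mul_sum]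

open Classical in
lemma aux_star_sum (r : ℕ) (y : Fin (r+1) → ℝ) :
    (∑ i, ∑ j, if (starG r).Adj i j then y i * y j else 0)
      = 2 * (y 0 * ∑ i : Fin r, y i.succ) := by
  simp only [starG, SimpleGraph.fromRel_adj]
  rw [Fin.sum_univ_succ]
  have h0 : (∑ j, if (0 : Fin (r+1)) ≠ j ∧ ((0:Fin (r+1)) = 0 ∨ j = 0) then y 0 * y j else 0)
      = y 0 * ∑ i : Fin r, y i.succ := by
    rw [Fin.sum_univ_succ]
    simp [Fin.succ_ne_zero, Ne,
      (fun i => (Fin.succ_ne_zero i).symm : ∀ i : Fin r, (0 : Fin (r+1)) ≠ i.succ)]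
    rw [Finset.mul_sum]
  rw [h0]
  have h1 : ∀ i : Fin r, (∑ j, if i.succ ≠ j ∧ (i.succ = 0 ∨ j = 0) then y i.succ * y j else 0)
      = y i.succ * y 0 := by
    intro i
    rw [Fin.sum_univ_succ]
    simp [Fin.succ_ne_zero, Ne]
  simp only [h1]
  rw [← Finset.sum_mul]
  ring

open Classical in
lemma aux_k2_sum (t : ℕ) (z : Fin t × Fin 2 → ℝ) :
    (∑ p, ∑ q, if (nK2 t).Adj p q then z p * z q else 0)
      = 2 * ∑ k : Fin t, z (k,0) * z (k,1) := by
  simp only [nK2, SimpleGraph.fromRel_adj]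
  rw [Fintype.sum_prod_type]
  simp only [Fintype.sum_prod_type]
  simp only [Fin.sum_univ_two]
  have eab : ∀ (k : Fin t) (a b : Fin 2), (∑ l : Fin t,
      if (k,a) ≠ (l,b) ∧ (k = l ∨ l = k) then z (k,a) * z (l,b) else 0)
      = if a = b then 0 else z (k,a) * z (k,b) := by
    intro k a b
    have key : ∀ l : Fin t, (if (k,a) ≠ (l,b) ∧ (k = l ∨ l = k)
        then z (k,a) * z (l,b) else 0)
        = if l = k then (if a = b then 0 else z (k,a) * z (l,b)) else 0 := by
      intro l
      by_cases h : l = k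
      · subst h
        by_cases hab : a = b
        · subst hab; simp
        · simp [Prod.ext_iff, hab]
      · have hkl : ¬ k = l := fun hh => h hh.symm
        simp [Prod.ext_iff, h, hkl]
    simp only [key]
    rw [Finset.sum_ite_eq' Finset.univ k
      (fun l => if a = b then 0 else z (k,a) * z (l,b))]
    simp
  simp only [Finset.sum_add_distrib, eab]
  norm_num
  rw [Finset.mul_sum, ← Finset.sum_add_distrib]
  apply Finset.sum_congr rfl
  intro k _
  ring

open Classical in
lemma aux_adj_sum (r s t : ℕ)
    (x : (Fin (r+1) ⊕ (Fin s ⊕ Fin t × Fin 2)) → ℝ) :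
    (∑ v, ∑ w, (if (starG r ⊕g ((⊥ : SimpleGraph (Fin s)) ⊕g nK2 t)).Adj v w
        then x v * x w else 0))
      = 2 * (x (Sum.inl 0) * ∑ i : Fin r, x (Sum.inl i.succ))
        + 2 * ∑ k : Fin t, x (Sum.inr (Sum.inr (k,0))) * x (Sum.inr (Sum.inr (k,1))) := by
  rw [Fintype.sum_sum_type]
  simp only [Fintype.sum_sum_type, SimpleGraph.sum_adj]
  simp only [if_false, Finset.sum_const_zero, add_zero, zero_add]
  rw [aux_star_sum r (fun i => x (Sum.inl i)), aux_k2_sum t (fun p => x (Sum.inr (Sum.inr p)))]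
  simp [SimpleGraph.bot_adj]

lemma aux_sum_decomp (r s t : ℕ) (f : (Fin (r+1) ⊕ (Fin s ⊕ Fin t × Fin 2)) → ℝ) :
    ∑ v, f v = f (Sum.inl 0) + (∑ i : Fin r, f (Sum.inl i.succ))
      + (∑ j : Fin s, f (Sum.inr (Sum.inl j)))
      + (∑ k : Fin t, f (Sum.inr (Sum.inr (k,0))))
      + (∑ k : Fin t, f (Sum.inr (Sum.inr (k,1)))) := by
  rw [Fintype.sum_sum_type, Fintype.sum_sum_type, Fintype.sum_prod_type, Fin.sum_univ_succ]
  simp only [Fin.sum_univ_two, Finset.sum_add_distrib]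
  ring

lemma aux_scalar_key (r s t c L U W Sl Su Sw : ℝ)
    (hr : 2 ≤ r) (hs : 0 ≤ s) (ht : 0 ≤ t)
    (hSu : 0 ≤ Su) (hSw : 0 ≤ Sw)
    (hL : L^2 ≤ r * Sl) (hU : U^2 ≤ s * Su) (hW : W^2 ≤ t * Sw)
    (hc : (r-4)*(s+4*t-4) ≤ 36) :
    0 ≤ (c+L+U+W)^2 + 4*c^2 + 4*Sl + 4*Su + Sw - 4*c*L := by
  have key1 : (r-4)*(U+W)^2 ≤ (r+5)*(4*Su+Sw) := by
    rcases le_or_gt r 4 with h4 | h4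
    · nlinarith [sq_nonneg (U+W)]
    · have hX : 0 ≤ s*Sw + 16*t*Su := by positivity
      have hUW2 : U^2 * W^2 ≤ (s*Su) * (t*Sw) :=
        mul_le_mul hU hW (sq_nonneg W) (mul_nonneg hs hSu)
      have h2 : (8*U*W)^2 ≤ (s*Sw + 16*t*Su)^2 := by
        nlinarith [sq_nonneg (s*Sw - 16*t*Su)]
      have h3 : 8*U*W ≤ s*Sw + 16*t*Su := by nlinarith [h2, hX]
      have h1 : 4*(U+W)^2 ≤ (s+4*t)*(4*Su+Sw) := by nlinarith [h3, hU, hW]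
      have h2' : (r-4)*(s+4*t) ≤ 4*(r+5) := by nlinarith [hc]
      have hA : (r-4) * (4*(U+W)^2) ≤ (r-4) * ((s+4*t)*(4*Su+Sw)) :=
        mul_le_mul_of_nonneg_left h1 (by linarith)
      have hB : ((r-4)*(s+4*t)) * (4*Su+Sw) ≤ (4*(r+5)) * (4*Su+Sw) :=
        mul_le_mul_of_nonneg_right h2' (by linarith)
      nlinarith [hA, hB]
  have key2 : 0 ≤ 4*L^2 + 12*L*(U+W) + 4*(U+W)^2 + 20*Sl + 20*Su + 5*Sw := by
    have hr0 : (0:ℝ) < r := by linarith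
    have hbig : 0 ≤ ((4*r+20)*L + 6*r*(U+W))^2
        + 20*r*((r+5)*(4*Su+Sw) - (r-4)*(U+W)^2)
        + 20*(4*r+20)*(r*Sl - L^2) := by
      have t1 : 0 ≤ ((4*r+20)*L + 6*r*(U+W))^2 := sq_nonneg _
      have t2 : 0 ≤ 20*r*((r+5)*(4*Su+Sw) - (r-4)*(U+W)^2) := by
        apply mul_nonneg (by linarith)
        linarith [key1]
      have t3 : 0 ≤ 20*(4*r+20)*(r*Sl - L^2) := by
        apply mul_nonneg (by linarith)
        linarith [hL]
      linarith
    have hid : ((4*r+20)*L + 6*r*(U+W))^2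
        + 20*r*((r+5)*(4*Su+Sw) - (r-4)*(U+W)^2)
        + 20*(4*r+20)*(r*Sl - L^2)
        = ((4*r+20)*r) * (4*L^2 + 12*L*(U+W) + 4*(U+W)^2 + 20*Sl + 20*Su + 5*Sw) := by
      ring
    rw [hid] at hbig
    by_contra hneg
    push_neg at hneg
    have : ((4*r+20)*r) * (4*L^2 + 12*L*(U+W) + 4*(U+W)^2 + 20*Sl + 20*Su + 5*Sw) < 0 :=
      mul_neg_of_pos_of_neg (by nlinarith) hneg
    linarith
  nlinarith [sq_nonneg (5*c+U+W-L), key2]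

set_option maxHeartbeats 1000000 in
/-- For integers `r ≥ 2`, `s, t ≥ 0` with `s + t ≥ 1`, the Seidel matrix of
`K_{1,r}(s,t)` (the disjoint union of `K_{1,r}`, `s` isolated vertices and `t` copies of
`K₂`) has smallest eigenvalue `≥ -5` iff `(r - 4)(s + 4t - 4) ≤ 36`. -/
theorem stmt_12 (r s t : ℕ) (hr : 2 ≤ r) (hst : 1 ≤ s + t) :
    -5 ≤ minSeidelEig (starG r ⊕g ((⊥ : SimpleGraph (Fin s)) ⊕g nK2 t)) ↔
      ((r : ℤ) - 4) * ((s : ℤ) + 4 * (t : ℤ) - 4) ≤ 36 := by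
  classical
  set G := starG r ⊕g ((⊥ : SimpleGraph (Fin s)) ⊕g nK2 t) with hG
  have hH : (seidelOf G).IsHermitian := aux_seidelOf_isHermitian G
  have hne : Nonempty (Fin (r+1) ⊕ (Fin s ⊕ Fin t × Fin 2)) := ⟨Sum.inl 0⟩
  rw [aux_minSeidelEig_eq G, aux_minEig_ge_iff hH]
  -- master formula, for every x
  have master : ∀ x : (Fin (r+1) ⊕ (Fin s ⊕ Fin t × Fin 2)) → ℝ,
      x ⬝ᵥ (seidelOf G *ᵥ x) + 5 * (x ⬝ᵥ x)
        = (x (Sum.inl 0) + (∑ i : Fin r, x (Sum.inl i.succ))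
            + (∑ j : Fin s, x (Sum.inr (Sum.inl j)))
            + (∑ k : Fin t, x (Sum.inr (Sum.inr (k,0))))
            + (∑ k : Fin t, x (Sum.inr (Sum.inr (k,1)))))^2
          + 4 * ((x (Sum.inl 0))^2 + (∑ i : Fin r, (x (Sum.inl i.succ))^2)
            + (∑ j : Fin s, (x (Sum.inr (Sum.inl j)))^2)
            + (∑ k : Fin t, (x (Sum.inr (Sum.inr (k,0))))^2)
            + (∑ k : Fin t, (x (Sum.inr (Sum.inr (k,1))))^2))
          - 4 * (x (Sum.inl 0) * ∑ i : Fin r, x (Sum.inl i.succ))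
          - 4 * ∑ k : Fin t, x (Sum.inr (Sum.inr (k,0))) * x (Sum.inr (Sum.inr (k,1))) := by
    intro x
    have hdot : x ⬝ᵥ x = ∑ v, (x v)^2 := by
      simp [dotProduct, sq]
    rw [aux_seidel_quadform G x, hG, aux_adj_sum r s t x, hdot,
      aux_sum_decomp r s t x, aux_sum_decomp r s t (fun v => (x v)^2)]
    ring
  constructor
  · -- min eigenvalue bound implies the integer inequality
    intro h
    by_contra h36
    push_neg at h36
    have hD : (37 : ℤ) ≤ ((r : ℤ) - 4) * ((s : ℤ) + 4 * (t : ℤ) - 4) := h36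
    have hP : (0:ℝ) < ((r:ℝ)-4)*((s:ℝ)+4*(t:ℝ)-4) - 36 := by
      have h37 : ((37:ℤ) : ℝ) ≤ ((((r : ℤ) - 4) * ((s : ℤ) + 4 * (t : ℤ) - 4)) : ℤ) := by
        exact_mod_cast hD
      push_cast at h37
      linarith
    have hM : (0:ℝ) < (s:ℝ) + 4*(t:ℝ) := by
      have h1 : (1:ℝ) ≤ (s:ℝ) + (t:ℝ) := by exact_mod_cast hst
      have ht0 : (0:ℝ) ≤ (t:ℝ) := by positivity
      linarith
    have hrR : (2:ℝ) ≤ (r:ℝ) := by exact_mod_cast hr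
    have h0 := h (Sum.elim
      (fun i : Fin (r+1) => if i = 0 then -((s:ℝ)+4*(t:ℝ))*((r:ℝ)+2) else -3*((s:ℝ)+4*(t:ℝ)))
      (Sum.elim (fun _ : Fin s => 2*(r:ℝ)+10) (fun _ : Fin t × Fin 2 => 4*(r:ℝ)+20)))
    have h1 := master (Sum.elim
      (fun i : Fin (r+1) => if i = 0 then -((s:ℝ)+4*(t:ℝ))*((r:ℝ)+2) else -3*((s:ℝ)+4*(t:ℝ)))
      (Sum.elim (fun _ : Fin s => 2*(r:ℝ)+10) (fun _ : Fin t × Fin 2 => 4*(r:ℝ)+20)))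
    simp only [Sum.elim_inl, Sum.elim_inr, Fin.succ_ne_zero, if_false, if_true,
      eq_self_iff_true, Finset.sum_const, Finset.card_univ, Fintype.card_fin,
      nsmul_eq_mul] at h1
    have h2 : (0:ℝ) ≤ ((s:ℝ):ℝ) * 1 := by positivity
    have hcontr := h1
    have hfinal : False := by
      nlinarith [h0, h1, hP, hM, hrR,
        mul_pos (mul_pos hM (show (0:ℝ) < (r:ℝ)+5 by linarith)) hP]
    exact hfinal
  · -- integer inequality implies eigenvalue bound
    intro h36 x
    rw [show (-5 : ℝ) * (x ⬝ᵥ x) ≤ x ⬝ᵥ (seidelOf G *ᵥ x)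
        ↔ 0 ≤ x ⬝ᵥ (seidelOf G *ᵥ x) + 5 * (x ⬝ᵥ x) from by constructor <;> intro <;> linarith]
    rw [master x]
    set c := x (Sum.inl 0)
    set L := ∑ i : Fin r, x (Sum.inl i.succ) with hLdef
    set U := ∑ j : Fin s, x (Sum.inr (Sum.inl j)) with hUdef
    set A := ∑ k : Fin t, x (Sum.inr (Sum.inr (k,0))) with hAdef
    set B := ∑ k : Fin t, x (Sum.inr (Sum.inr (k,1))) with hBdef
    set Sl := ∑ i : Fin r, (x (Sum.inl i.succ))^2 with hSldef
    set Su := ∑ j : Fin s, (x (Sum.inr (Sum.inl j)))^2 with hSudef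
    set Sa := ∑ k : Fin t, (x (Sum.inr (Sum.inr (k,0))))^2 with hSadef
    set Sb := ∑ k : Fin t, (x (Sum.inr (Sum.inr (k,1))))^2 with hSbdef
    set P := ∑ k : Fin t, x (Sum.inr (Sum.inr (k,0))) * x (Sum.inr (Sum.inr (k,1))) with hPdef
    set Sw := ∑ k : Fin t, (x (Sum.inr (Sum.inr (k,0))) + x (Sum.inr (Sum.inr (k,1))))^2
      with hSwdef
    have hL : L^2 ≤ (r:ℝ) * Sl := by
      simpa using sq_sum_le_card_mul_sum_sq (s := Finset.univ)
        (f := fun i : Fin r => x (Sum.inl i.succ))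
    have hU : U^2 ≤ (s:ℝ) * Su := by
      simpa using sq_sum_le_card_mul_sum_sq (s := Finset.univ)
        (f := fun j : Fin s => x (Sum.inr (Sum.inl j)))
    have hW : (A+B)^2 ≤ (t:ℝ) * Sw := by
      have : A + B = ∑ k : Fin t,
          (x (Sum.inr (Sum.inr (k,0))) + x (Sum.inr (Sum.inr (k,1)))) := by
        rw [hAdef, hBdef, ← Finset.sum_add_distrib]
      rw [this]
      simpa using sq_sum_le_card_mul_sum_sq (s := Finset.univ)
        (f := fun k : Fin t => x (Sum.inr (Sum.inr (k,0))) + x (Sum.inr (Sum.inr (k,1))))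
    have hab : Sw ≤ 4*Sa + 4*Sb - 4*P := by
      have h1 : Sw ≤ ∑ k : Fin t, (4*(x (Sum.inr (Sum.inr (k,0))))^2
          + 4*(x (Sum.inr (Sum.inr (k,1))))^2
          - 4*(x (Sum.inr (Sum.inr (k,0))) * x (Sum.inr (Sum.inr (k,1))))) := by
        rw [hSwdef]
        apply Finset.sum_le_sum
        intro k _
        nlinarith [sq_nonneg (x (Sum.inr (Sum.inr (k,0))) - x (Sum.inr (Sum.inr (k,1))))]
      have h2 : ∑ k : Fin t, (4*(x (Sum.inr (Sum.inr (k,0))))^2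
          + 4*(x (Sum.inr (Sum.inr (k,1))))^2
          - 4*(x (Sum.inr (Sum.inr (k,0))) * x (Sum.inr (Sum.inr (k,1)))))
          = 4*Sa + 4*Sb - 4*P := by
        rw [hSadef, hSbdef, hPdef, Finset.mul_sum, Finset.mul_sum, Finset.mul_sum,
          Finset.sum_sub_distrib, Finset.sum_add_distrib]
      linarith [h1, h2.symm.le, h2.le]
    have hSu0 : 0 ≤ Su := Finset.sum_nonneg fun j _ => sq_nonneg _
    have hSw0 : 0 ≤ Sw := Finset.sum_nonneg fun k _ => sq_nonneg _
    have hcR : ((r:ℝ)-4)*((s:ℝ)+4*(t:ℝ)-4) ≤ 36 := by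
      have : (((r:ℤ) - 4) * ((s:ℤ) + 4*(t:ℤ) - 4) : ℤ) ≤ (36:ℤ) := h36
      have h' : (((r:ℤ) - 4) * ((s:ℤ) + 4*(t:ℤ) - 4) : ℝ) ≤ 36 := by exact_mod_cast this
      push_cast at h'
      linarith
    have key := aux_scalar_key (r:ℝ) (s:ℝ) (t:ℝ) c L U (A+B) Sl Su Sw
      (by exact_mod_cast hr) (by positivity) (by positivity) hSu0 hSw0 hL hU hW hcR
    linarith [key, hab]
end

section
/- Let B_1 be the bowtie graph (two triangles sharing exactly one common vertex, on 5 vertices) and let B_2 be the graph on 6 vertices obtained from the diamond K_{2,1,1} (the complete graph K_4 minus one edge) by attaching two pendant vertices to one of its two vertices of degree 3. Then B_1(14) ∈ F_{−5} and B_2(9) ∈ F_{−5}; that is, λ_min(S(B_1(14))) < −5 and every proper induced subgraph H of B_1(14) satisfies λ_min(S(H)) ≥ −5, and likewise λ_min(S(B_2(9))) < −5 and every proper induced subgraph H of B_2(9) satisfies λ_min(S(H)) ≥ −5. -/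
open Matrix

/-- Membership in `F_{-5}`: `λ_min(S(G)) < -5` while every proper induced subgraph `H`
satisfies `λ_min(S(H)) ≥ -5`. -/
def MemF5 {V : Type*} [Finite V] (G : SimpleGraph V) : Prop :=
  minSeidelEig G < -5 ∧ ∀ s : Set V, s ≠ Set.univ → -5 ≤ minSeidelEig (G.induce s)

/-- The bowtie `B₁`: two triangles `{0,1,2}` and `{2,3,4}` sharing the vertex `2`. -/
def bowtie : SimpleGraph (Fin 5) :=
  SimpleGraph.fromRel fun i j =>
    (i = 0 ∧ j = 1) ∨ (i = 0 ∧ j = 2) ∨ (i = 1 ∧ j = 2) ∨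
    (i = 2 ∧ j = 3) ∨ (i = 2 ∧ j = 4) ∨ (i = 3 ∧ j = 4)

/-- The graph `B₂`: the diamond on `{1,2,3,4}` (all edges except `2–4`), with two pendant
vertices `0` and `5` attached to the degree-3 vertex `1`. -/
def B2graph : SimpleGraph (Fin 6) :=
  SimpleGraph.fromRel fun i j =>
    (i = 0 ∧ j = 1) ∨ (i = 1 ∧ j = 2) ∨ (i = 2 ∧ j = 3) ∨ (i = 3 ∧ j = 4) ∨
    (i = 4 ∧ j = 1) ∨ (i = 1 ∧ j = 3) ∨ (i = 1 ∧ j = 5)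



section helper
variable {ι : Type*} [Fintype ι] [DecidableEq ι]

lemma seidelOf_isHermitian (G : SimpleGraph ι) : (seidelOf G).IsHermitian := by
  ext i j
  simp only [seidelOf, conjTranspose_apply, of_apply, star_trivial]
  by_cases h : i = j
  · subst h; simp
  · rw [if_neg h, if_neg (Ne.symm h), G.adj_comm j i]

lemma le_minEig (A : Matrix ι ι ℝ) (hA : A.IsHermitian) {c : ℝ} (hc : c ≤ 0)
    (h : ∀ x : ι → ℝ, c * (x ⬝ᵥ x) ≤ x ⬝ᵥ (A *ᵥ x)) : c ≤ minEig A := by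
  rw [minEig, dif_pos hA]
  rcases isEmpty_or_nonempty ι with hι | hι
  · rw [iInf_of_isEmpty, Real.sInf_empty]; exact hc
  · refine le_ciInf fun i => ?_
    have hv := hA.mulVec_eigenvectorBasis i
    set v : ι → ℝ := ⇑(hA.eigenvectorBasis i) with hvdef
    have hnorm : v ⬝ᵥ v = 1 := by
      have h1 : ‖hA.eigenvectorBasis i‖ = 1 := hA.eigenvectorBasis.orthonormal.1 i
      have h2 : v ⬝ᵥ v = ‖hA.eigenvectorBasis i‖ ^ 2 := by
        rw [EuclideanSpace.norm_eq, Real.sq_sqrt (by positivity)]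
        simp [dotProduct, sq, hvdef]
      rw [h2, h1, one_pow]
    have h3 := h v
    rw [hv, dotProduct_smul, smul_eq_mul, hnorm, mul_one, mul_one] at h3
    exact h3

lemma quad_of_le_minEig (A : Matrix ι ι ℝ) (hA : A.IsHermitian) {c : ℝ}
    (h : c ≤ minEig A) (x : ι → ℝ) : c * (x ⬝ᵥ x) ≤ x ⬝ᵥ (A *ᵥ x) := by
  rw [minEig, dif_pos hA] at h
  have hev : ∀ i, c ≤ hA.eigenvalues i := fun i =>
    le_trans h (ciInf_le (Finite.bddBelow_range _) i)
  have hpsd : (A - c • 1).PosSemidef := by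
    have hD : Matrix.diagonal (fun i => hA.eigenvalues i - c) =
        Matrix.diagonal (RCLike.ofReal ∘ hA.eigenvalues) - c • 1 := by
      ext i j
      by_cases hij : i = j
      · subst hij; simp [Matrix.diagonal_apply_eq, Matrix.one_apply_eq]
      · simp [Matrix.diagonal_apply_ne _ hij, Matrix.one_apply_ne hij]
    have hUU : (hA.eigenvectorUnitary : Matrix ι ι ℝ) *
        (star (hA.eigenvectorUnitary : Matrix ι ι ℝ)) = 1 := by
      exact (Matrix.mem_unitaryGroup_iff).mp hA.eigenvectorUnitary.2
    have h1 : A - c • 1 = (hA.eigenvectorUnitary : Matrix ι ι ℝ) *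
        Matrix.diagonal (fun i => hA.eigenvalues i - c) *
        (hA.eigenvectorUnitary : Matrix ι ι ℝ)ᴴ := by
      rw [hD]
      rw [Matrix.mul_sub, Matrix.sub_mul]
      rw [← Matrix.star_eq_conjTranspose]
      rw [Matrix.mul_smul, Matrix.smul_mul, Matrix.mul_one, hUU]
      conv_lhs => rw [hA.spectral_theorem]
      rfl
    rw [h1]
    exact (Matrix.PosSemidef.diagonal fun i => sub_nonneg.2 (hev i)).mul_mul_conjTranspose_same _
  have h2 := hpsd.dotProduct_mulVec_nonneg x
  have hsx : star x = x := by
    funext i; simp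
  rw [hsx, Matrix.sub_mulVec, dotProduct_sub, Matrix.smul_mulVec, Matrix.one_mulVec,
    dotProduct_smul, smul_eq_mul] at h2
  linarith

end helper

lemma minEig_congr {m : Type*} (i1 i2 : Fintype m) (d1 d2 : DecidableEq m)
    (A : Matrix m m ℝ) : @minEig m i1 d1 A = @minEig m i2 d2 A := by
  cases Subsingleton.elim i1 i2
  cases Subsingleton.elim d1 d2
  rfl

lemma sum_over_subtype {V : Type*} [Fintype V] (s : Set V) [DecidablePred (· ∈ s)] (f : V → ℝ)
    (hf : ∀ v, v ∉ s → f v = 0) : ∑ v, f v = ∑ u : ↥s, f ↑u := by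
  rw [← Finset.sum_subtype (Finset.univ.filter (· ∈ s)) (fun x => by simp) f]
  exact (Finset.sum_subset (Finset.filter_subset _ _)
    (fun v _ hv => hf v (by simpa using hv))).symm

lemma seidelOf_induce {V : Type*} [Fintype V] (G : SimpleGraph V) (s : Set V) [Fintype ↥s]
    (u w : ↥s) : seidelOf (G.induce s) u w = seidelOf G ↑u ↑w := by
  simp only [seidelOf, Matrix.of_apply]
  by_cases h : u = w
  · subst h; simp
  · rw [if_neg h, if_neg (fun hc => h (Subtype.ext hc))]
    have hadj : (G.induce s).Adj u w ↔ G.Adj ↑u ↑w := by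
      exact Iff.rfl
    by_cases ha : G.Adj ↑u ↑w
    · rw [if_pos (hadj.mpr ha), if_pos ha]
    · rw [if_neg (fun hc => ha (hadj.mp hc)), if_neg ha]

lemma memF5_of {V : Type*} [Fintype V] [DecidableEq V] (G : SimpleGraph V)
    (M : Matrix V V ℤ)
    (hM : ∀ p q, ((M p q : ℤ) : ℝ) = seidelOf G p q + (if p = q then 5 else 0))
    (x : V → ℤ) (hx : x ⬝ᵥ (M *ᵥ x) < 0)
    (cert : ∀ i : V, ∃ (B : Matrix V V ℤ) (d : V → ℤ) (c : ℤ), 0 < c ∧ (∀ k, 0 ≤ d k) ∧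
      Bᵀ * (Matrix.of fun p q => d p * B p q) =
        c • Matrix.of (fun p q => if p = i ∨ q = i then (0:ℤ) else M p q)) :
    MemF5 G := by
  classical
  have hMext : M.map (Int.cast : ℤ → ℝ) = seidelOf G + Matrix.diagonal (fun _ => 5) := by
    ext p q
    rw [Matrix.map_apply, hM p q]
    by_cases h : p = q
    · subst h; simp
    · simp [h, Matrix.diagonal_apply_ne _ h]
  have hdiagquad : ∀ y : V → ℝ, y ⬝ᵥ (Matrix.diagonal (fun _ => (5:ℝ)) *ᵥ y) = 5 * (y ⬝ᵥ y) := by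
    intro y
    simp [dotProduct, Matrix.mulVec_diagonal, Finset.mul_sum, mul_left_comm]
  constructor
  · -- strict part
    have hunfold : minSeidelEig G = minEig (seidelOf G) := by
      unfold minSeidelEig
      exact minEig_congr _ _ _ _ _
    rw [hunfold]
    by_contra hcon
    push_neg at hcon
    set xr : V → ℝ := fun v => (x v : ℝ) with hxr
    have key := quad_of_le_minEig _ (seidelOf_isHermitian G) hcon xr
    have h1 : ((x ⬝ᵥ (M *ᵥ x) : ℤ) : ℝ) = xr ⬝ᵥ ((M.map (Int.cast : ℤ → ℝ)) *ᵥ xr) := by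
      simp only [dotProduct, Matrix.mulVec, dotProduct, Matrix.map_apply, hxr]
      push_cast
      rfl
    have h2 : xr ⬝ᵥ ((M.map (Int.cast : ℤ → ℝ)) *ᵥ xr)
        = xr ⬝ᵥ (seidelOf G *ᵥ xr) + 5 * (xr ⬝ᵥ xr) := by
      rw [hMext, Matrix.add_mulVec, dotProduct_add, hdiagquad]
    have h3 : ((x ⬝ᵥ (M *ᵥ x) : ℤ) : ℝ) < 0 := by exact_mod_cast hx
    rw [h1, h2] at h3
    linarith
  · -- subgraph part
    intro s hs
    obtain ⟨i, hi⟩ := (Set.ne_univ_iff_exists_notMem s).mp hs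
    obtain ⟨B, d, c, hc, hd, hBM⟩ := cert i
    have hunfold2 : minSeidelEig (G.induce s) = minEig (seidelOf (G.induce s)) := by
      unfold minSeidelEig
      exact minEig_congr _ _ _ _ _
    rw [hunfold2]
    refine le_minEig _ (seidelOf_isHermitian _) (by norm_num) ?_
    intro z
    set y : V → ℝ := fun v => if h : v ∈ s then z ⟨v, h⟩ else 0 with hy
    set Br : Matrix V V ℝ := B.map (Int.cast : ℤ → ℝ) with hBr
    set Mz : Matrix V V ℤ := Matrix.of (fun p q => if p = i ∨ q = i then (0:ℤ) else M p q) with hMz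
    set Mzr : Matrix V V ℝ := Mz.map (Int.cast : ℤ → ℝ) with hMzr
    have hA : 0 ≤ y ⬝ᵥ (Mzr *ᵥ y) := by
      have hcast : Brᵀ * (Matrix.of fun p q => (d p : ℝ) * Br p q) = (c:ℝ) • Mzr := by
        ext p q
        have hent := congrFun (congrFun hBM p) q
        simp only [Matrix.mul_apply, Matrix.transpose_apply, Matrix.of_apply,
          Matrix.smul_apply, smul_eq_mul] at hent
        simp only [Matrix.mul_apply, Matrix.transpose_apply, Matrix.of_apply,
          Matrix.smul_apply, smul_eq_mul, hBr, hMzr, hMz, Matrix.map_apply]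
        exact_mod_cast hent
      have hquad : (c:ℝ) * (y ⬝ᵥ (Mzr *ᵥ y)) = ∑ k, (d k : ℝ) * ((Br *ᵥ y) k)^2 := by
        have e1 : (c:ℝ) * (y ⬝ᵥ (Mzr *ᵥ y)) = y ⬝ᵥ (((c:ℝ) • Mzr) *ᵥ y) := by
          rw [Matrix.smul_mulVec, dotProduct_smul, smul_eq_mul]
        rw [e1, ← hcast]
        rw [← Matrix.mulVec_mulVec, Matrix.dotProduct_mulVec, Matrix.vecMul_transpose]
        have hP : (Matrix.of fun p q => (d p : ℝ) * Br p q) *ᵥ y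
            = fun k => (d k : ℝ) * (Br *ᵥ y) k := by
          funext k
          simp [Matrix.mulVec, dotProduct, Finset.mul_sum, mul_assoc]
        rw [hP, dotProduct]
        refine Finset.sum_congr rfl fun k _ => ?_
        ring
      have hsum : 0 ≤ ∑ k, (d k : ℝ) * ((Br *ᵥ y) k)^2 :=
        Finset.sum_nonneg fun k _ => mul_nonneg (by exact_mod_cast hd k) (sq_nonneg _)
      have hcpos : (0:ℝ) < (c:ℝ) := by exact_mod_cast hc
      nlinarith [hquad, hsum]
    have hySupp : ∀ v, v ∉ s → y v = 0 := fun v hv => dif_neg hv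
    have hyz : ∀ u : ↥s, y ↑u = z u := by
      intro u
      rw [hy]
      simp only [u.2, dif_pos]
    have hB2 : y ⬝ᵥ (Mzr *ᵥ y) = z ⬝ᵥ (seidelOf (G.induce s) *ᵥ z) + 5 * (z ⬝ᵥ z) := by
      have hout : y ⬝ᵥ (Mzr *ᵥ y) = ∑ u : ↥s, z u * (∑ w : ↥s, Mzr ↑u ↑w * z w) := by
        rw [dotProduct]
        rw [sum_over_subtype s _ (fun v hv => by rw [hySupp v hv, zero_mul])]
        refine Finset.sum_congr rfl fun u _ => ?_
        rw [hyz u]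
        congr 1
        show (Mzr *ᵥ y) ↑u = _
        rw [Matrix.mulVec, dotProduct]
        rw [sum_over_subtype s _ (fun v hv => by rw [hySupp v hv, mul_zero])]
        exact Finset.sum_congr rfl fun w _ => by rw [hyz w]
      have hentry : ∀ u w : ↥s, Mzr ↑u ↑w
          = seidelOf (G.induce s) u w + (if u = w then (5:ℝ) else 0) := by
        intro u w
        have hu : (↑u : V) ≠ i := fun h => hi (h ▸ u.2)
        have hw : (↑w : V) ≠ i := fun h => hi (h ▸ w.2)
        have h0 : Mzr ↑u ↑w = ((M ↑u ↑w : ℤ) : ℝ) := by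
          simp [hMzr, hMz, hu, hw]
        rw [h0, hM, seidelOf_induce]
        congr 1
        by_cases h : u = w
        · subst h; simp
        · rw [if_neg h, if_neg (fun hc' => h (Subtype.ext hc'))]
      rw [hout]
      have step : ∀ u : ↥s, (∑ w : ↥s, Mzr ↑u ↑w * z w)
          = (∑ w : ↥s, seidelOf (G.induce s) u w * z w) + 5 * z u := by
        intro u
        simp only [hentry, add_mul, Finset.sum_add_distrib]
        congr 1
        simp [ite_mul]
      calc ∑ u : ↥s, z u * (∑ w : ↥s, Mzr ↑u ↑w * z w)
          = ∑ u : ↥s, (z u * (∑ w : ↥s, seidelOf (G.induce s) u w * z w) + 5 * (z u * z u)) := by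
            refine Finset.sum_congr rfl fun u _ => ?_
            rw [step u]; ring
        _ = z ⬝ᵥ (seidelOf (G.induce s) *ᵥ z) + 5 * (z ⬝ᵥ z) := by
            rw [Finset.sum_add_distrib, ← Finset.mul_sum]
            rfl
    linarith [hA, hB2]


instance decRelSumAdj {α β : Type*} {G : SimpleGraph α} {H : SimpleGraph β}
    [DecidableRel G.Adj] [DecidableRel H.Adj] : DecidableRel (G ⊕g H).Adj := fun i j =>
  match i, j with
  | Sum.inl a, Sum.inl b => inferInstanceAs (Decidable (G.Adj a b))
  | Sum.inl _, Sum.inr _ => inferInstanceAs (Decidable (false = true))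
  | Sum.inr _, Sum.inl _ => inferInstanceAs (Decidable (false = true))
  | Sum.inr a, Sum.inr b => inferInstanceAs (Decidable (H.Adj a b))

instance : DecidableRel bowtie.Adj := fun a b =>
  decidable_of_iff _ (SimpleGraph.fromRel_adj _ a b).symm

instance : DecidableRel B2graph.Adj := fun a b =>
  decidable_of_iff _ (SimpleGraph.fromRel_adj _ a b).symm


def encA : Fin 5 ⊕ Fin 14 → ℕ := Sum.elim Fin.val (fun a => 5 + a.val)
def matOfA (L : List (List ℤ)) : Matrix (Fin 5 ⊕ Fin 14) (Fin 5 ⊕ Fin 14) ℤ :=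
  Matrix.of fun p q => ((L.getD (encA p) []).getD (encA q) 0)
def vecOfA (L : List ℤ) : Fin 5 ⊕ Fin 14 → ℤ := fun p => L.getD (encA p) 0
def MmA : Matrix (Fin 5 ⊕ Fin 14) (Fin 5 ⊕ Fin 14) ℤ := matOfA [[5,-1,-1,1,1,1,1,1,1,1,1,1,1,1,1,1,1,1,1],
[-1,5,-1,1,1,1,1,1,1,1,1,1,1,1,1,1,1,1,1],
[-1,-1,5,-1,-1,1,1,1,1,1,1,1,1,1,1,1,1,1,1],
[1,1,-1,5,-1,1,1,1,1,1,1,1,1,1,1,1,1,1,1],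
[1,1,-1,-1,5,1,1,1,1,1,1,1,1,1,1,1,1,1,1],
[1,1,1,1,1,5,1,1,1,1,1,1,1,1,1,1,1,1,1],
[1,1,1,1,1,1,5,1,1,1,1,1,1,1,1,1,1,1,1],
[1,1,1,1,1,1,1,5,1,1,1,1,1,1,1,1,1,1,1],
[1,1,1,1,1,1,1,1,5,1,1,1,1,1,1,1,1,1,1],
[1,1,1,1,1,1,1,1,1,5,1,1,1,1,1,1,1,1,1],
[1,1,1,1,1,1,1,1,1,1,5,1,1,1,1,1,1,1,1],
[1,1,1,1,1,1,1,1,1,1,1,5,1,1,1,1,1,1,1],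
[1,1,1,1,1,1,1,1,1,1,1,1,5,1,1,1,1,1,1],
[1,1,1,1,1,1,1,1,1,1,1,1,1,5,1,1,1,1,1],
[1,1,1,1,1,1,1,1,1,1,1,1,1,1,5,1,1,1,1],
[1,1,1,1,1,1,1,1,1,1,1,1,1,1,1,5,1,1,1],
[1,1,1,1,1,1,1,1,1,1,1,1,1,1,1,1,5,1,1],
[1,1,1,1,1,1,1,1,1,1,1,1,1,1,1,1,1,5,1],
[1,1,1,1,1,1,1,1,1,1,1,1,1,1,1,1,1,1,5]]
def xxA : Fin 5 ⊕ Fin 14 → ℤ := vecOfA [35,35,58,35,35,-11,-11,-11,-11,-11,-11,-11,-11,-11,-11,-11,-11,-11,-11]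

def BcA_0 : List (List ℤ) := [[1,0,0,0,0,0,0,0,0,0,0,0,0,0,0,0,0,0,0],
[0,5,-1,1,1,1,1,1,1,1,1,1,1,1,1,1,1,1,1],
[0,0,12,-2,-2,3,3,3,3,3,3,3,3,3,3,3,3,3,3],
[0,0,0,14,-4,3,3,3,3,3,3,3,3,3,3,3,3,3,3],
[0,0,0,0,10,3,3,3,3,3,3,3,3,3,3,3,3,3,3],
[0,0,0,0,0,39,-1,-1,-1,-1,-1,-1,-1,-1,-1,-1,-1,-1,-1],
[0,0,0,0,0,0,38,-1,-1,-1,-1,-1,-1,-1,-1,-1,-1,-1,-1],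
[0,0,0,0,0,0,0,37,-1,-1,-1,-1,-1,-1,-1,-1,-1,-1,-1],
[0,0,0,0,0,0,0,0,36,-1,-1,-1,-1,-1,-1,-1,-1,-1,-1],
[0,0,0,0,0,0,0,0,0,35,-1,-1,-1,-1,-1,-1,-1,-1,-1],
[0,0,0,0,0,0,0,0,0,0,34,-1,-1,-1,-1,-1,-1,-1,-1],
[0,0,0,0,0,0,0,0,0,0,0,33,-1,-1,-1,-1,-1,-1,-1],
[0,0,0,0,0,0,0,0,0,0,0,0,32,-1,-1,-1,-1,-1,-1],
[0,0,0,0,0,0,0,0,0,0,0,0,0,31,-1,-1,-1,-1,-1],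
[0,0,0,0,0,0,0,0,0,0,0,0,0,0,30,-1,-1,-1,-1],
[0,0,0,0,0,0,0,0,0,0,0,0,0,0,0,29,-1,-1,-1],
[0,0,0,0,0,0,0,0,0,0,0,0,0,0,0,0,28,-1,-1],
[0,0,0,0,0,0,0,0,0,0,0,0,0,0,0,0,0,27,-1],
[0,0,0,0,0,0,0,0,0,0,0,0,0,0,0,0,0,0,1]]

def ecA_0 : List ℤ := [0,2323013676984,387168946164,276549247260,497788645068,29782226628,31349712240,33044291280,34880085240,36873232968,39042246672,41408443440,43996471155,46834953165,49957283376,53402613264,57217085640,61455388280,44739522667840]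

def BcA_1 : List (List ℤ) := [[5,0,-1,1,1,1,1,1,1,1,1,1,1,1,1,1,1,1,1],
[0,1,0,0,0,0,0,0,0,0,0,0,0,0,0,0,0,0,0],
[0,0,12,-2,-2,3,3,3,3,3,3,3,3,3,3,3,3,3,3],
[0,0,0,14,-4,3,3,3,3,3,3,3,3,3,3,3,3,3,3],
[0,0,0,0,10,3,3,3,3,3,3,3,3,3,3,3,3,3,3],
[0,0,0,0,0,39,-1,-1,-1,-1,-1,-1,-1,-1,-1,-1,-1,-1,-1],
[0,0,0,0,0,0,38,-1,-1,-1,-1,-1,-1,-1,-1,-1,-1,-1,-1],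
[0,0,0,0,0,0,0,37,-1,-1,-1,-1,-1,-1,-1,-1,-1,-1,-1],
[0,0,0,0,0,0,0,0,36,-1,-1,-1,-1,-1,-1,-1,-1,-1,-1],
[0,0,0,0,0,0,0,0,0,35,-1,-1,-1,-1,-1,-1,-1,-1,-1],
[0,0,0,0,0,0,0,0,0,0,34,-1,-1,-1,-1,-1,-1,-1,-1],
[0,0,0,0,0,0,0,0,0,0,0,33,-1,-1,-1,-1,-1,-1,-1],
[0,0,0,0,0,0,0,0,0,0,0,0,32,-1,-1,-1,-1,-1,-1],
[0,0,0,0,0,0,0,0,0,0,0,0,0,31,-1,-1,-1,-1,-1],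
[0,0,0,0,0,0,0,0,0,0,0,0,0,0,30,-1,-1,-1,-1],
[0,0,0,0,0,0,0,0,0,0,0,0,0,0,0,29,-1,-1,-1],
[0,0,0,0,0,0,0,0,0,0,0,0,0,0,0,0,28,-1,-1],
[0,0,0,0,0,0,0,0,0,0,0,0,0,0,0,0,0,27,-1],
[0,0,0,0,0,0,0,0,0,0,0,0,0,0,0,0,0,0,1]]

def ecA_1 : List ℤ := [2323013676984,0,387168946164,276549247260,497788645068,29782226628,31349712240,33044291280,34880085240,36873232968,39042246672,41408443440,43996471155,46834953165,49957283376,53402613264,57217085640,61455388280,44739522667840]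

def BcA_2 : List (List ℤ) := [[5,-1,0,1,1,1,1,1,1,1,1,1,1,1,1,1,1,1,1],
[0,4,0,1,1,1,1,1,1,1,1,1,1,1,1,1,1,1,1],
[0,0,1,0,0,0,0,0,0,0,0,0,0,0,0,0,0,0,0],
[0,0,0,9,-3,1,1,1,1,1,1,1,1,1,1,1,1,1,1],
[0,0,0,0,6,1,1,1,1,1,1,1,1,1,1,1,1,1,1],
[0,0,0,0,0,13,1,1,1,1,1,1,1,1,1,1,1,1,1],
[0,0,0,0,0,0,14,1,1,1,1,1,1,1,1,1,1,1,1],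
[0,0,0,0,0,0,0,15,1,1,1,1,1,1,1,1,1,1,1],
[0,0,0,0,0,0,0,0,16,1,1,1,1,1,1,1,1,1,1],
[0,0,0,0,0,0,0,0,0,17,1,1,1,1,1,1,1,1,1],
[0,0,0,0,0,0,0,0,0,0,18,1,1,1,1,1,1,1,1],
[0,0,0,0,0,0,0,0,0,0,0,19,1,1,1,1,1,1,1],
[0,0,0,0,0,0,0,0,0,0,0,0,20,1,1,1,1,1,1],
[0,0,0,0,0,0,0,0,0,0,0,0,0,21,1,1,1,1,1],
[0,0,0,0,0,0,0,0,0,0,0,0,0,0,22,1,1,1,1],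
[0,0,0,0,0,0,0,0,0,0,0,0,0,0,0,23,1,1,1],
[0,0,0,0,0,0,0,0,0,0,0,0,0,0,0,0,24,1,1],
[0,0,0,0,0,0,0,0,0,0,0,0,0,0,0,0,0,25,1],
[0,0,0,0,0,0,0,0,0,0,0,0,0,0,0,0,0,0,1]]

def ecA_2 : List ℤ := [1338557220,2007835830,0,371821450,743642900,171609900,147094200,127481640,111546435,98423325,87487400,78278200,70450380,63740820,57946200,52907400,48498450,44618574,27841990176]

def BcA_3 : List (List ℤ) := [[5,-1,-1,0,1,1,1,1,1,1,1,1,1,1,1,1,1,1,1],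
[0,4,-1,0,1,1,1,1,1,1,1,1,1,1,1,1,1,1,1],
[0,0,9,0,-1,3,3,3,3,3,3,3,3,3,3,3,3,3,3],
[0,0,0,1,0,0,0,0,0,0,0,0,0,0,0,0,0,0,0],
[0,0,0,0,20,3,3,3,3,3,3,3,3,3,3,3,3,3,3],
[0,0,0,0,0,39,-1,-1,-1,-1,-1,-1,-1,-1,-1,-1,-1,-1,-1],
[0,0,0,0,0,0,38,-1,-1,-1,-1,-1,-1,-1,-1,-1,-1,-1,-1],
[0,0,0,0,0,0,0,37,-1,-1,-1,-1,-1,-1,-1,-1,-1,-1,-1],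
[0,0,0,0,0,0,0,0,36,-1,-1,-1,-1,-1,-1,-1,-1,-1,-1],
[0,0,0,0,0,0,0,0,0,35,-1,-1,-1,-1,-1,-1,-1,-1,-1],
[0,0,0,0,0,0,0,0,0,0,34,-1,-1,-1,-1,-1,-1,-1,-1],
[0,0,0,0,0,0,0,0,0,0,0,33,-1,-1,-1,-1,-1,-1,-1],
[0,0,0,0,0,0,0,0,0,0,0,0,32,-1,-1,-1,-1,-1,-1],
[0,0,0,0,0,0,0,0,0,0,0,0,0,31,-1,-1,-1,-1,-1],
[0,0,0,0,0,0,0,0,0,0,0,0,0,0,30,-1,-1,-1,-1],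
[0,0,0,0,0,0,0,0,0,0,0,0,0,0,0,29,-1,-1,-1],
[0,0,0,0,0,0,0,0,0,0,0,0,0,0,0,0,28,-1,-1],
[0,0,0,0,0,0,0,0,0,0,0,0,0,0,0,0,0,27,-1],
[0,0,0,0,0,0,0,0,0,0,0,0,0,0,0,0,0,0,1]]

def ecA_3 : List ℤ := [2323013676984,3484520515476,645281576940,0,129056315388,29782226628,31349712240,33044291280,34880085240,36873232968,39042246672,41408443440,43996471155,46834953165,49957283376,53402613264,57217085640,61455388280,44739522667840]

def BcA_4 : List (List ℤ) := [[5,-1,-1,1,0,1,1,1,1,1,1,1,1,1,1,1,1,1,1],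
[0,4,-1,1,0,1,1,1,1,1,1,1,1,1,1,1,1,1,1],
[0,0,9,-1,0,3,3,3,3,3,3,3,3,3,3,3,3,3,3],
[0,0,0,20,0,3,3,3,3,3,3,3,3,3,3,3,3,3,3],
[0,0,0,0,1,0,0,0,0,0,0,0,0,0,0,0,0,0,0],
[0,0,0,0,0,39,-1,-1,-1,-1,-1,-1,-1,-1,-1,-1,-1,-1,-1],
[0,0,0,0,0,0,38,-1,-1,-1,-1,-1,-1,-1,-1,-1,-1,-1,-1],
[0,0,0,0,0,0,0,37,-1,-1,-1,-1,-1,-1,-1,-1,-1,-1,-1],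
[0,0,0,0,0,0,0,0,36,-1,-1,-1,-1,-1,-1,-1,-1,-1,-1],
[0,0,0,0,0,0,0,0,0,35,-1,-1,-1,-1,-1,-1,-1,-1,-1],
[0,0,0,0,0,0,0,0,0,0,34,-1,-1,-1,-1,-1,-1,-1,-1],
[0,0,0,0,0,0,0,0,0,0,0,33,-1,-1,-1,-1,-1,-1,-1],
[0,0,0,0,0,0,0,0,0,0,0,0,32,-1,-1,-1,-1,-1,-1],
[0,0,0,0,0,0,0,0,0,0,0,0,0,31,-1,-1,-1,-1,-1],
[0,0,0,0,0,0,0,0,0,0,0,0,0,0,30,-1,-1,-1,-1],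
[0,0,0,0,0,0,0,0,0,0,0,0,0,0,0,29,-1,-1,-1],
[0,0,0,0,0,0,0,0,0,0,0,0,0,0,0,0,28,-1,-1],
[0,0,0,0,0,0,0,0,0,0,0,0,0,0,0,0,0,27,-1],
[0,0,0,0,0,0,0,0,0,0,0,0,0,0,0,0,0,0,1]]

def ecA_4 : List ℤ := [2323013676984,3484520515476,645281576940,129056315388,0,29782226628,31349712240,33044291280,34880085240,36873232968,39042246672,41408443440,43996471155,46834953165,49957283376,53402613264,57217085640,61455388280,44739522667840]

def BcA_5 : List (List ℤ) := [[5,-1,-1,1,1,0,1,1,1,1,1,1,1,1,1,1,1,1,1],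
[0,4,-1,1,1,0,1,1,1,1,1,1,1,1,1,1,1,1,1],
[0,0,9,-1,-1,0,3,3,3,3,3,3,3,3,3,3,3,3,3],
[0,0,0,20,-7,0,3,3,3,3,3,3,3,3,3,3,3,3,3],
[0,0,0,0,13,0,3,3,3,3,3,3,3,3,3,3,3,3,3],
[0,0,0,0,0,1,0,0,0,0,0,0,0,0,0,0,0,0,0],
[0,0,0,0,0,0,12,-1,-1,-1,-1,-1,-1,-1,-1,-1,-1,-1,-1],
[0,0,0,0,0,0,0,11,-1,-1,-1,-1,-1,-1,-1,-1,-1,-1,-1],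
[0,0,0,0,0,0,0,0,10,-1,-1,-1,-1,-1,-1,-1,-1,-1,-1],
[0,0,0,0,0,0,0,0,0,9,-1,-1,-1,-1,-1,-1,-1,-1,-1],
[0,0,0,0,0,0,0,0,0,0,8,-1,-1,-1,-1,-1,-1,-1,-1],
[0,0,0,0,0,0,0,0,0,0,0,7,-1,-1,-1,-1,-1,-1,-1],
[0,0,0,0,0,0,0,0,0,0,0,0,6,-1,-1,-1,-1,-1,-1],
[0,0,0,0,0,0,0,0,0,0,0,0,0,5,-1,-1,-1,-1,-1],
[0,0,0,0,0,0,0,0,0,0,0,0,0,0,4,-1,-1,-1,-1],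
[0,0,0,0,0,0,0,0,0,0,0,0,0,0,0,3,-1,-1,-1],
[0,0,0,0,0,0,0,0,0,0,0,0,0,0,0,0,2,-1,-1],
[0,0,0,0,0,0,0,0,0,0,0,0,0,0,0,0,0,1,-1],
[0,0,0,0,0,0,0,0,0,0,0,0,0,0,0,0,0,0,1]]

def ecA_5 : List ℤ := [18018,27027,5005,1001,2079,0,2310,2730,3276,4004,5005,6435,8580,12012,18018,30030,60060,180180,0]

def BcA_6 : List (List ℤ) := [[5,-1,-1,1,1,1,0,1,1,1,1,1,1,1,1,1,1,1,1],
[0,4,-1,1,1,1,0,1,1,1,1,1,1,1,1,1,1,1,1],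
[0,0,9,-1,-1,3,0,3,3,3,3,3,3,3,3,3,3,3,3],
[0,0,0,20,-7,3,0,3,3,3,3,3,3,3,3,3,3,3,3],
[0,0,0,0,13,3,0,3,3,3,3,3,3,3,3,3,3,3,3],
[0,0,0,0,0,12,0,-1,-1,-1,-1,-1,-1,-1,-1,-1,-1,-1,-1],
[0,0,0,0,0,0,1,0,0,0,0,0,0,0,0,0,0,0,0],
[0,0,0,0,0,0,0,11,-1,-1,-1,-1,-1,-1,-1,-1,-1,-1,-1],
[0,0,0,0,0,0,0,0,10,-1,-1,-1,-1,-1,-1,-1,-1,-1,-1],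
[0,0,0,0,0,0,0,0,0,9,-1,-1,-1,-1,-1,-1,-1,-1,-1],
[0,0,0,0,0,0,0,0,0,0,8,-1,-1,-1,-1,-1,-1,-1,-1],
[0,0,0,0,0,0,0,0,0,0,0,7,-1,-1,-1,-1,-1,-1,-1],
[0,0,0,0,0,0,0,0,0,0,0,0,6,-1,-1,-1,-1,-1,-1],
[0,0,0,0,0,0,0,0,0,0,0,0,0,5,-1,-1,-1,-1,-1],
[0,0,0,0,0,0,0,0,0,0,0,0,0,0,4,-1,-1,-1,-1],
[0,0,0,0,0,0,0,0,0,0,0,0,0,0,0,3,-1,-1,-1],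
[0,0,0,0,0,0,0,0,0,0,0,0,0,0,0,0,2,-1,-1],
[0,0,0,0,0,0,0,0,0,0,0,0,0,0,0,0,0,1,-1],
[0,0,0,0,0,0,0,0,0,0,0,0,0,0,0,0,0,0,1]]

def ecA_6 : List ℤ := [18018,27027,5005,1001,2079,2310,0,2730,3276,4004,5005,6435,8580,12012,18018,30030,60060,180180,0]

def BcA_7 : List (List ℤ) := [[5,-1,-1,1,1,1,1,0,1,1,1,1,1,1,1,1,1,1,1],
[0,4,-1,1,1,1,1,0,1,1,1,1,1,1,1,1,1,1,1],
[0,0,9,-1,-1,3,3,0,3,3,3,3,3,3,3,3,3,3,3],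
[0,0,0,20,-7,3,3,0,3,3,3,3,3,3,3,3,3,3,3],
[0,0,0,0,13,3,3,0,3,3,3,3,3,3,3,3,3,3,3],
[0,0,0,0,0,12,-1,0,-1,-1,-1,-1,-1,-1,-1,-1,-1,-1,-1],
[0,0,0,0,0,0,11,0,-1,-1,-1,-1,-1,-1,-1,-1,-1,-1,-1],
[0,0,0,0,0,0,0,1,0,0,0,0,0,0,0,0,0,0,0],
[0,0,0,0,0,0,0,0,10,-1,-1,-1,-1,-1,-1,-1,-1,-1,-1],
[0,0,0,0,0,0,0,0,0,9,-1,-1,-1,-1,-1,-1,-1,-1,-1],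
[0,0,0,0,0,0,0,0,0,0,8,-1,-1,-1,-1,-1,-1,-1,-1],
[0,0,0,0,0,0,0,0,0,0,0,7,-1,-1,-1,-1,-1,-1,-1],
[0,0,0,0,0,0,0,0,0,0,0,0,6,-1,-1,-1,-1,-1,-1],
[0,0,0,0,0,0,0,0,0,0,0,0,0,5,-1,-1,-1,-1,-1],
[0,0,0,0,0,0,0,0,0,0,0,0,0,0,4,-1,-1,-1,-1],
[0,0,0,0,0,0,0,0,0,0,0,0,0,0,0,3,-1,-1,-1],
[0,0,0,0,0,0,0,0,0,0,0,0,0,0,0,0,2,-1,-1],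
[0,0,0,0,0,0,0,0,0,0,0,0,0,0,0,0,0,1,-1],
[0,0,0,0,0,0,0,0,0,0,0,0,0,0,0,0,0,0,1]]

def ecA_7 : List ℤ := [18018,27027,5005,1001,2079,2310,2730,0,3276,4004,5005,6435,8580,12012,18018,30030,60060,180180,0]

def BcA_8 : List (List ℤ) := [[5,-1,-1,1,1,1,1,1,0,1,1,1,1,1,1,1,1,1,1],
[0,4,-1,1,1,1,1,1,0,1,1,1,1,1,1,1,1,1,1],
[0,0,9,-1,-1,3,3,3,0,3,3,3,3,3,3,3,3,3,3],
[0,0,0,20,-7,3,3,3,0,3,3,3,3,3,3,3,3,3,3],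
[0,0,0,0,13,3,3,3,0,3,3,3,3,3,3,3,3,3,3],
[0,0,0,0,0,12,-1,-1,0,-1,-1,-1,-1,-1,-1,-1,-1,-1,-1],
[0,0,0,0,0,0,11,-1,0,-1,-1,-1,-1,-1,-1,-1,-1,-1,-1],
[0,0,0,0,0,0,0,10,0,-1,-1,-1,-1,-1,-1,-1,-1,-1,-1],
[0,0,0,0,0,0,0,0,1,0,0,0,0,0,0,0,0,0,0],
[0,0,0,0,0,0,0,0,0,9,-1,-1,-1,-1,-1,-1,-1,-1,-1],
[0,0,0,0,0,0,0,0,0,0,8,-1,-1,-1,-1,-1,-1,-1,-1],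
[0,0,0,0,0,0,0,0,0,0,0,7,-1,-1,-1,-1,-1,-1,-1],
[0,0,0,0,0,0,0,0,0,0,0,0,6,-1,-1,-1,-1,-1,-1],
[0,0,0,0,0,0,0,0,0,0,0,0,0,5,-1,-1,-1,-1,-1],
[0,0,0,0,0,0,0,0,0,0,0,0,0,0,4,-1,-1,-1,-1],
[0,0,0,0,0,0,0,0,0,0,0,0,0,0,0,3,-1,-1,-1],
[0,0,0,0,0,0,0,0,0,0,0,0,0,0,0,0,2,-1,-1],
[0,0,0,0,0,0,0,0,0,0,0,0,0,0,0,0,0,1,-1],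
[0,0,0,0,0,0,0,0,0,0,0,0,0,0,0,0,0,0,1]]

def ecA_8 : List ℤ := [18018,27027,5005,1001,2079,2310,2730,3276,0,4004,5005,6435,8580,12012,18018,30030,60060,180180,0]

def BcA_9 : List (List ℤ) := [[5,-1,-1,1,1,1,1,1,1,0,1,1,1,1,1,1,1,1,1],
[0,4,-1,1,1,1,1,1,1,0,1,1,1,1,1,1,1,1,1],
[0,0,9,-1,-1,3,3,3,3,0,3,3,3,3,3,3,3,3,3],
[0,0,0,20,-7,3,3,3,3,0,3,3,3,3,3,3,3,3,3],
[0,0,0,0,13,3,3,3,3,0,3,3,3,3,3,3,3,3,3],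
[0,0,0,0,0,12,-1,-1,-1,0,-1,-1,-1,-1,-1,-1,-1,-1,-1],
[0,0,0,0,0,0,11,-1,-1,0,-1,-1,-1,-1,-1,-1,-1,-1,-1],
[0,0,0,0,0,0,0,10,-1,0,-1,-1,-1,-1,-1,-1,-1,-1,-1],
[0,0,0,0,0,0,0,0,9,0,-1,-1,-1,-1,-1,-1,-1,-1,-1],
[0,0,0,0,0,0,0,0,0,1,0,0,0,0,0,0,0,0,0],
[0,0,0,0,0,0,0,0,0,0,8,-1,-1,-1,-1,-1,-1,-1,-1],
[0,0,0,0,0,0,0,0,0,0,0,7,-1,-1,-1,-1,-1,-1,-1],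
[0,0,0,0,0,0,0,0,0,0,0,0,6,-1,-1,-1,-1,-1,-1],
[0,0,0,0,0,0,0,0,0,0,0,0,0,5,-1,-1,-1,-1,-1],
[0,0,0,0,0,0,0,0,0,0,0,0,0,0,4,-1,-1,-1,-1],
[0,0,0,0,0,0,0,0,0,0,0,0,0,0,0,3,-1,-1,-1],
[0,0,0,0,0,0,0,0,0,0,0,0,0,0,0,0,2,-1,-1],
[0,0,0,0,0,0,0,0,0,0,0,0,0,0,0,0,0,1,-1],
[0,0,0,0,0,0,0,0,0,0,0,0,0,0,0,0,0,0,1]]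

def ecA_9 : List ℤ := [18018,27027,5005,1001,2079,2310,2730,3276,4004,0,5005,6435,8580,12012,18018,30030,60060,180180,0]

def BcA_10 : List (List ℤ) := [[5,-1,-1,1,1,1,1,1,1,1,0,1,1,1,1,1,1,1,1],
[0,4,-1,1,1,1,1,1,1,1,0,1,1,1,1,1,1,1,1],
[0,0,9,-1,-1,3,3,3,3,3,0,3,3,3,3,3,3,3,3],
[0,0,0,20,-7,3,3,3,3,3,0,3,3,3,3,3,3,3,3],
[0,0,0,0,13,3,3,3,3,3,0,3,3,3,3,3,3,3,3],
[0,0,0,0,0,12,-1,-1,-1,-1,0,-1,-1,-1,-1,-1,-1,-1,-1],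
[0,0,0,0,0,0,11,-1,-1,-1,0,-1,-1,-1,-1,-1,-1,-1,-1],
[0,0,0,0,0,0,0,10,-1,-1,0,-1,-1,-1,-1,-1,-1,-1,-1],
[0,0,0,0,0,0,0,0,9,-1,0,-1,-1,-1,-1,-1,-1,-1,-1],
[0,0,0,0,0,0,0,0,0,8,0,-1,-1,-1,-1,-1,-1,-1,-1],
[0,0,0,0,0,0,0,0,0,0,1,0,0,0,0,0,0,0,0],
[0,0,0,0,0,0,0,0,0,0,0,7,-1,-1,-1,-1,-1,-1,-1],
[0,0,0,0,0,0,0,0,0,0,0,0,6,-1,-1,-1,-1,-1,-1],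
[0,0,0,0,0,0,0,0,0,0,0,0,0,5,-1,-1,-1,-1,-1],
[0,0,0,0,0,0,0,0,0,0,0,0,0,0,4,-1,-1,-1,-1],
[0,0,0,0,0,0,0,0,0,0,0,0,0,0,0,3,-1,-1,-1],
[0,0,0,0,0,0,0,0,0,0,0,0,0,0,0,0,2,-1,-1],
[0,0,0,0,0,0,0,0,0,0,0,0,0,0,0,0,0,1,-1],
[0,0,0,0,0,0,0,0,0,0,0,0,0,0,0,0,0,0,1]]

def ecA_10 : List ℤ := [18018,27027,5005,1001,2079,2310,2730,3276,4004,5005,0,6435,8580,12012,18018,30030,60060,180180,0]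

def BcA_11 : List (List ℤ) := [[5,-1,-1,1,1,1,1,1,1,1,1,0,1,1,1,1,1,1,1],
[0,4,-1,1,1,1,1,1,1,1,1,0,1,1,1,1,1,1,1],
[0,0,9,-1,-1,3,3,3,3,3,3,0,3,3,3,3,3,3,3],
[0,0,0,20,-7,3,3,3,3,3,3,0,3,3,3,3,3,3,3],
[0,0,0,0,13,3,3,3,3,3,3,0,3,3,3,3,3,3,3],
[0,0,0,0,0,12,-1,-1,-1,-1,-1,0,-1,-1,-1,-1,-1,-1,-1],
[0,0,0,0,0,0,11,-1,-1,-1,-1,0,-1,-1,-1,-1,-1,-1,-1],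
[0,0,0,0,0,0,0,10,-1,-1,-1,0,-1,-1,-1,-1,-1,-1,-1],
[0,0,0,0,0,0,0,0,9,-1,-1,0,-1,-1,-1,-1,-1,-1,-1],
[0,0,0,0,0,0,0,0,0,8,-1,0,-1,-1,-1,-1,-1,-1,-1],
[0,0,0,0,0,0,0,0,0,0,7,0,-1,-1,-1,-1,-1,-1,-1],
[0,0,0,0,0,0,0,0,0,0,0,1,0,0,0,0,0,0,0],
[0,0,0,0,0,0,0,0,0,0,0,0,6,-1,-1,-1,-1,-1,-1],
[0,0,0,0,0,0,0,0,0,0,0,0,0,5,-1,-1,-1,-1,-1],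
[0,0,0,0,0,0,0,0,0,0,0,0,0,0,4,-1,-1,-1,-1],
[0,0,0,0,0,0,0,0,0,0,0,0,0,0,0,3,-1,-1,-1],
[0,0,0,0,0,0,0,0,0,0,0,0,0,0,0,0,2,-1,-1],
[0,0,0,0,0,0,0,0,0,0,0,0,0,0,0,0,0,1,-1],
[0,0,0,0,0,0,0,0,0,0,0,0,0,0,0,0,0,0,1]]

def ecA_11 : List ℤ := [18018,27027,5005,1001,2079,2310,2730,3276,4004,5005,6435,0,8580,12012,18018,30030,60060,180180,0]

def BcA_12 : List (List ℤ) := [[5,-1,-1,1,1,1,1,1,1,1,1,1,0,1,1,1,1,1,1],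
[0,4,-1,1,1,1,1,1,1,1,1,1,0,1,1,1,1,1,1],
[0,0,9,-1,-1,3,3,3,3,3,3,3,0,3,3,3,3,3,3],
[0,0,0,20,-7,3,3,3,3,3,3,3,0,3,3,3,3,3,3],
[0,0,0,0,13,3,3,3,3,3,3,3,0,3,3,3,3,3,3],
[0,0,0,0,0,12,-1,-1,-1,-1,-1,-1,0,-1,-1,-1,-1,-1,-1],
[0,0,0,0,0,0,11,-1,-1,-1,-1,-1,0,-1,-1,-1,-1,-1,-1],
[0,0,0,0,0,0,0,10,-1,-1,-1,-1,0,-1,-1,-1,-1,-1,-1],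
[0,0,0,0,0,0,0,0,9,-1,-1,-1,0,-1,-1,-1,-1,-1,-1],
[0,0,0,0,0,0,0,0,0,8,-1,-1,0,-1,-1,-1,-1,-1,-1],
[0,0,0,0,0,0,0,0,0,0,7,-1,0,-1,-1,-1,-1,-1,-1],
[0,0,0,0,0,0,0,0,0,0,0,6,0,-1,-1,-1,-1,-1,-1],
[0,0,0,0,0,0,0,0,0,0,0,0,1,0,0,0,0,0,0],
[0,0,0,0,0,0,0,0,0,0,0,0,0,5,-1,-1,-1,-1,-1],
[0,0,0,0,0,0,0,0,0,0,0,0,0,0,4,-1,-1,-1,-1],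
[0,0,0,0,0,0,0,0,0,0,0,0,0,0,0,3,-1,-1,-1],
[0,0,0,0,0,0,0,0,0,0,0,0,0,0,0,0,2,-1,-1],
[0,0,0,0,0,0,0,0,0,0,0,0,0,0,0,0,0,1,-1],
[0,0,0,0,0,0,0,0,0,0,0,0,0,0,0,0,0,0,1]]

def ecA_12 : List ℤ := [18018,27027,5005,1001,2079,2310,2730,3276,4004,5005,6435,8580,0,12012,18018,30030,60060,180180,0]

def BcA_13 : List (List ℤ) := [[5,-1,-1,1,1,1,1,1,1,1,1,1,1,0,1,1,1,1,1],
[0,4,-1,1,1,1,1,1,1,1,1,1,1,0,1,1,1,1,1],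
[0,0,9,-1,-1,3,3,3,3,3,3,3,3,0,3,3,3,3,3],
[0,0,0,20,-7,3,3,3,3,3,3,3,3,0,3,3,3,3,3],
[0,0,0,0,13,3,3,3,3,3,3,3,3,0,3,3,3,3,3],
[0,0,0,0,0,12,-1,-1,-1,-1,-1,-1,-1,0,-1,-1,-1,-1,-1],
[0,0,0,0,0,0,11,-1,-1,-1,-1,-1,-1,0,-1,-1,-1,-1,-1],
[0,0,0,0,0,0,0,10,-1,-1,-1,-1,-1,0,-1,-1,-1,-1,-1],
[0,0,0,0,0,0,0,0,9,-1,-1,-1,-1,0,-1,-1,-1,-1,-1],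
[0,0,0,0,0,0,0,0,0,8,-1,-1,-1,0,-1,-1,-1,-1,-1],
[0,0,0,0,0,0,0,0,0,0,7,-1,-1,0,-1,-1,-1,-1,-1],
[0,0,0,0,0,0,0,0,0,0,0,6,-1,0,-1,-1,-1,-1,-1],
[0,0,0,0,0,0,0,0,0,0,0,0,5,0,-1,-1,-1,-1,-1],
[0,0,0,0,0,0,0,0,0,0,0,0,0,1,0,0,0,0,0],
[0,0,0,0,0,0,0,0,0,0,0,0,0,0,4,-1,-1,-1,-1],
[0,0,0,0,0,0,0,0,0,0,0,0,0,0,0,3,-1,-1,-1],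
[0,0,0,0,0,0,0,0,0,0,0,0,0,0,0,0,2,-1,-1],
[0,0,0,0,0,0,0,0,0,0,0,0,0,0,0,0,0,1,-1],
[0,0,0,0,0,0,0,0,0,0,0,0,0,0,0,0,0,0,1]]

def ecA_13 : List ℤ := [18018,27027,5005,1001,2079,2310,2730,3276,4004,5005,6435,8580,12012,0,18018,30030,60060,180180,0]

def BcA_14 : List (List ℤ) := [[5,-1,-1,1,1,1,1,1,1,1,1,1,1,1,0,1,1,1,1],
[0,4,-1,1,1,1,1,1,1,1,1,1,1,1,0,1,1,1,1],
[0,0,9,-1,-1,3,3,3,3,3,3,3,3,3,0,3,3,3,3],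
[0,0,0,20,-7,3,3,3,3,3,3,3,3,3,0,3,3,3,3],
[0,0,0,0,13,3,3,3,3,3,3,3,3,3,0,3,3,3,3],
[0,0,0,0,0,12,-1,-1,-1,-1,-1,-1,-1,-1,0,-1,-1,-1,-1],
[0,0,0,0,0,0,11,-1,-1,-1,-1,-1,-1,-1,0,-1,-1,-1,-1],
[0,0,0,0,0,0,0,10,-1,-1,-1,-1,-1,-1,0,-1,-1,-1,-1],
[0,0,0,0,0,0,0,0,9,-1,-1,-1,-1,-1,0,-1,-1,-1,-1],
[0,0,0,0,0,0,0,0,0,8,-1,-1,-1,-1,0,-1,-1,-1,-1],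
[0,0,0,0,0,0,0,0,0,0,7,-1,-1,-1,0,-1,-1,-1,-1],
[0,0,0,0,0,0,0,0,0,0,0,6,-1,-1,0,-1,-1,-1,-1],
[0,0,0,0,0,0,0,0,0,0,0,0,5,-1,0,-1,-1,-1,-1],
[0,0,0,0,0,0,0,0,0,0,0,0,0,4,0,-1,-1,-1,-1],
[0,0,0,0,0,0,0,0,0,0,0,0,0,0,1,0,0,0,0],
[0,0,0,0,0,0,0,0,0,0,0,0,0,0,0,3,-1,-1,-1],
[0,0,0,0,0,0,0,0,0,0,0,0,0,0,0,0,2,-1,-1],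
[0,0,0,0,0,0,0,0,0,0,0,0,0,0,0,0,0,1,-1],
[0,0,0,0,0,0,0,0,0,0,0,0,0,0,0,0,0,0,1]]

def ecA_14 : List ℤ := [18018,27027,5005,1001,2079,2310,2730,3276,4004,5005,6435,8580,12012,18018,0,30030,60060,180180,0]

def BcA_15 : List (List ℤ) := [[5,-1,-1,1,1,1,1,1,1,1,1,1,1,1,1,0,1,1,1],
[0,4,-1,1,1,1,1,1,1,1,1,1,1,1,1,0,1,1,1],
[0,0,9,-1,-1,3,3,3,3,3,3,3,3,3,3,0,3,3,3],
[0,0,0,20,-7,3,3,3,3,3,3,3,3,3,3,0,3,3,3],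
[0,0,0,0,13,3,3,3,3,3,3,3,3,3,3,0,3,3,3],
[0,0,0,0,0,12,-1,-1,-1,-1,-1,-1,-1,-1,-1,0,-1,-1,-1],
[0,0,0,0,0,0,11,-1,-1,-1,-1,-1,-1,-1,-1,0,-1,-1,-1],
[0,0,0,0,0,0,0,10,-1,-1,-1,-1,-1,-1,-1,0,-1,-1,-1],
[0,0,0,0,0,0,0,0,9,-1,-1,-1,-1,-1,-1,0,-1,-1,-1],
[0,0,0,0,0,0,0,0,0,8,-1,-1,-1,-1,-1,0,-1,-1,-1],
[0,0,0,0,0,0,0,0,0,0,7,-1,-1,-1,-1,0,-1,-1,-1],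
[0,0,0,0,0,0,0,0,0,0,0,6,-1,-1,-1,0,-1,-1,-1],
[0,0,0,0,0,0,0,0,0,0,0,0,5,-1,-1,0,-1,-1,-1],
[0,0,0,0,0,0,0,0,0,0,0,0,0,4,-1,0,-1,-1,-1],
[0,0,0,0,0,0,0,0,0,0,0,0,0,0,3,0,-1,-1,-1],
[0,0,0,0,0,0,0,0,0,0,0,0,0,0,0,1,0,0,0],
[0,0,0,0,0,0,0,0,0,0,0,0,0,0,0,0,2,-1,-1],
[0,0,0,0,0,0,0,0,0,0,0,0,0,0,0,0,0,1,-1],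
[0,0,0,0,0,0,0,0,0,0,0,0,0,0,0,0,0,0,1]]

def ecA_15 : List ℤ := [18018,27027,5005,1001,2079,2310,2730,3276,4004,5005,6435,8580,12012,18018,30030,0,60060,180180,0]

def BcA_16 : List (List ℤ) := [[5,-1,-1,1,1,1,1,1,1,1,1,1,1,1,1,1,0,1,1],
[0,4,-1,1,1,1,1,1,1,1,1,1,1,1,1,1,0,1,1],
[0,0,9,-1,-1,3,3,3,3,3,3,3,3,3,3,3,0,3,3],
[0,0,0,20,-7,3,3,3,3,3,3,3,3,3,3,3,0,3,3],
[0,0,0,0,13,3,3,3,3,3,3,3,3,3,3,3,0,3,3],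
[0,0,0,0,0,12,-1,-1,-1,-1,-1,-1,-1,-1,-1,-1,0,-1,-1],
[0,0,0,0,0,0,11,-1,-1,-1,-1,-1,-1,-1,-1,-1,0,-1,-1],
[0,0,0,0,0,0,0,10,-1,-1,-1,-1,-1,-1,-1,-1,0,-1,-1],
[0,0,0,0,0,0,0,0,9,-1,-1,-1,-1,-1,-1,-1,0,-1,-1],
[0,0,0,0,0,0,0,0,0,8,-1,-1,-1,-1,-1,-1,0,-1,-1],
[0,0,0,0,0,0,0,0,0,0,7,-1,-1,-1,-1,-1,0,-1,-1],
[0,0,0,0,0,0,0,0,0,0,0,6,-1,-1,-1,-1,0,-1,-1],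
[0,0,0,0,0,0,0,0,0,0,0,0,5,-1,-1,-1,0,-1,-1],
[0,0,0,0,0,0,0,0,0,0,0,0,0,4,-1,-1,0,-1,-1],
[0,0,0,0,0,0,0,0,0,0,0,0,0,0,3,-1,0,-1,-1],
[0,0,0,0,0,0,0,0,0,0,0,0,0,0,0,2,0,-1,-1],
[0,0,0,0,0,0,0,0,0,0,0,0,0,0,0,0,1,0,0],
[0,0,0,0,0,0,0,0,0,0,0,0,0,0,0,0,0,1,-1],
[0,0,0,0,0,0,0,0,0,0,0,0,0,0,0,0,0,0,1]]

def ecA_16 : List ℤ := [18018,27027,5005,1001,2079,2310,2730,3276,4004,5005,6435,8580,12012,18018,30030,60060,0,180180,0]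

def BcA_17 : List (List ℤ) := [[5,-1,-1,1,1,1,1,1,1,1,1,1,1,1,1,1,1,0,1],
[0,4,-1,1,1,1,1,1,1,1,1,1,1,1,1,1,1,0,1],
[0,0,9,-1,-1,3,3,3,3,3,3,3,3,3,3,3,3,0,3],
[0,0,0,20,-7,3,3,3,3,3,3,3,3,3,3,3,3,0,3],
[0,0,0,0,13,3,3,3,3,3,3,3,3,3,3,3,3,0,3],
[0,0,0,0,0,12,-1,-1,-1,-1,-1,-1,-1,-1,-1,-1,-1,0,-1],
[0,0,0,0,0,0,11,-1,-1,-1,-1,-1,-1,-1,-1,-1,-1,0,-1],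
[0,0,0,0,0,0,0,10,-1,-1,-1,-1,-1,-1,-1,-1,-1,0,-1],
[0,0,0,0,0,0,0,0,9,-1,-1,-1,-1,-1,-1,-1,-1,0,-1],
[0,0,0,0,0,0,0,0,0,8,-1,-1,-1,-1,-1,-1,-1,0,-1],
[0,0,0,0,0,0,0,0,0,0,7,-1,-1,-1,-1,-1,-1,0,-1],
[0,0,0,0,0,0,0,0,0,0,0,6,-1,-1,-1,-1,-1,0,-1],
[0,0,0,0,0,0,0,0,0,0,0,0,5,-1,-1,-1,-1,0,-1],
[0,0,0,0,0,0,0,0,0,0,0,0,0,4,-1,-1,-1,0,-1],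
[0,0,0,0,0,0,0,0,0,0,0,0,0,0,3,-1,-1,0,-1],
[0,0,0,0,0,0,0,0,0,0,0,0,0,0,0,2,-1,0,-1],
[0,0,0,0,0,0,0,0,0,0,0,0,0,0,0,0,1,0,-1],
[0,0,0,0,0,0,0,0,0,0,0,0,0,0,0,0,0,1,0],
[0,0,0,0,0,0,0,0,0,0,0,0,0,0,0,0,0,0,1]]

def ecA_17 : List ℤ := [18018,27027,5005,1001,2079,2310,2730,3276,4004,5005,6435,8580,12012,18018,30030,60060,180180,0,0]

def BcA_18 : List (List ℤ) := [[5,-1,-1,1,1,1,1,1,1,1,1,1,1,1,1,1,1,1,0],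
[0,4,-1,1,1,1,1,1,1,1,1,1,1,1,1,1,1,1,0],
[0,0,9,-1,-1,3,3,3,3,3,3,3,3,3,3,3,3,3,0],
[0,0,0,20,-7,3,3,3,3,3,3,3,3,3,3,3,3,3,0],
[0,0,0,0,13,3,3,3,3,3,3,3,3,3,3,3,3,3,0],
[0,0,0,0,0,12,-1,-1,-1,-1,-1,-1,-1,-1,-1,-1,-1,-1,0],
[0,0,0,0,0,0,11,-1,-1,-1,-1,-1,-1,-1,-1,-1,-1,-1,0],
[0,0,0,0,0,0,0,10,-1,-1,-1,-1,-1,-1,-1,-1,-1,-1,0],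
[0,0,0,0,0,0,0,0,9,-1,-1,-1,-1,-1,-1,-1,-1,-1,0],
[0,0,0,0,0,0,0,0,0,8,-1,-1,-1,-1,-1,-1,-1,-1,0],
[0,0,0,0,0,0,0,0,0,0,7,-1,-1,-1,-1,-1,-1,-1,0],
[0,0,0,0,0,0,0,0,0,0,0,6,-1,-1,-1,-1,-1,-1,0],
[0,0,0,0,0,0,0,0,0,0,0,0,5,-1,-1,-1,-1,-1,0],
[0,0,0,0,0,0,0,0,0,0,0,0,0,4,-1,-1,-1,-1,0],
[0,0,0,0,0,0,0,0,0,0,0,0,0,0,3,-1,-1,-1,0],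
[0,0,0,0,0,0,0,0,0,0,0,0,0,0,0,2,-1,-1,0],
[0,0,0,0,0,0,0,0,0,0,0,0,0,0,0,0,1,-1,0],
[0,0,0,0,0,0,0,0,0,0,0,0,0,0,0,0,0,1,0],
[0,0,0,0,0,0,0,0,0,0,0,0,0,0,0,0,0,0,1]]

def ecA_18 : List ℤ := [18018,27027,5005,1001,2079,2310,2730,3276,4004,5005,6435,8580,12012,18018,30030,60060,180180,0,0]


set_option maxHeartbeats 1000000 in
lemma hMA : ∀ p q : Fin 5 ⊕ Fin 14,
    ((MmA p q : ℤ) : ℝ) = seidelOf (bowtie ⊕g (⊥ : SimpleGraph (Fin 14))) p q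
      + (if p = q then 5 else 0) := by
  have hdiag : ∀ p : Fin 5 ⊕ Fin 14, MmA p p = 5 := by decide
  have hoff : ∀ p q : Fin 5 ⊕ Fin 14, p ≠ q →
      ((bowtie ⊕g (⊥ : SimpleGraph (Fin 14))).Adj p q → MmA p q = -1) ∧
      (¬(bowtie ⊕g (⊥ : SimpleGraph (Fin 14))).Adj p q → MmA p q = 1) := by
    letI : ∀ (p q : Fin 5 ⊕ Fin 14) (k : ℤ), Decidable (MmA p q = k) := fun p q k => Int.decEq _ _
    decide
  intro p q
  by_cases h : p = q
  · subst h; rw [hdiag p]; simp [seidelOf]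
  · rw [if_neg h]
    by_cases ha : (bowtie ⊕g (⊥ : SimpleGraph (Fin 14))).Adj p q
    · rw [(hoff p q h).1 ha]; simp only [seidelOf, Matrix.of_apply, if_neg h, if_pos ha]; norm_num
    · rw [(hoff p q h).2 ha]; simp only [seidelOf, Matrix.of_apply, if_neg h, if_neg ha]; norm_num

set_option maxHeartbeats 1000000 in
lemma hxA : xxA ⬝ᵥ (MmA *ᵥ xxA) < 0 := by decide

set_option maxHeartbeats 0 in
set_option maxRecDepth 200000 in
lemma certA : ∀ i : Fin 5 ⊕ Fin 14, ∃ (B : Matrix (Fin 5 ⊕ Fin 14) (Fin 5 ⊕ Fin 14) ℤ)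
    (d : Fin 5 ⊕ Fin 14 → ℤ) (c : ℤ), 0 < c ∧ (∀ k, 0 ≤ d k) ∧
      Bᵀ * (Matrix.of fun p q => d p * B p q) =
        c • Matrix.of (fun p q => if p = i ∨ q = i then (0:ℤ) else MmA p q) := by
  intro i
  rcases i with a | a <;> fin_cases a
  exacts [⟨matOfA BcA_0, vecOfA ecA_0, 11615068384920, by decide, by decide, by decide⟩,
    ⟨matOfA BcA_1, vecOfA ecA_1, 11615068384920, by decide, by decide, by decide⟩,
    ⟨matOfA BcA_2, vecOfA ecA_2, 6692786100, by decide, by decide, by decide⟩,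
    ⟨matOfA BcA_3, vecOfA ecA_3, 11615068384920, by decide, by decide, by decide⟩,
    ⟨matOfA BcA_4, vecOfA ecA_4, 11615068384920, by decide, by decide, by decide⟩,
    ⟨matOfA BcA_5, vecOfA ecA_5, 90090, by decide, by decide, by decide⟩,
    ⟨matOfA BcA_6, vecOfA ecA_6, 90090, by decide, by decide, by decide⟩,
    ⟨matOfA BcA_7, vecOfA ecA_7, 90090, by decide, by decide, by decide⟩,
    ⟨matOfA BcA_8, vecOfA ecA_8, 90090, by decide, by decide, by decide⟩,
    ⟨matOfA BcA_9, vecOfA ecA_9, 90090, by decide, by decide, by decide⟩,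
    ⟨matOfA BcA_10, vecOfA ecA_10, 90090, by decide, by decide, by decide⟩,
    ⟨matOfA BcA_11, vecOfA ecA_11, 90090, by decide, by decide, by decide⟩,
    ⟨matOfA BcA_12, vecOfA ecA_12, 90090, by decide, by decide, by decide⟩,
    ⟨matOfA BcA_13, vecOfA ecA_13, 90090, by decide, by decide, by decide⟩,
    ⟨matOfA BcA_14, vecOfA ecA_14, 90090, by decide, by decide, by decide⟩,
    ⟨matOfA BcA_15, vecOfA ecA_15, 90090, by decide, by decide, by decide⟩,
    ⟨matOfA BcA_16, vecOfA ecA_16, 90090, by decide, by decide, by decide⟩,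
    ⟨matOfA BcA_17, vecOfA ecA_17, 90090, by decide, by decide, by decide⟩,
    ⟨matOfA BcA_18, vecOfA ecA_18, 90090, by decide, by decide, by decide⟩]


def encB : Fin 6 ⊕ Fin 9 → ℕ := Sum.elim Fin.val (fun a => 6 + a.val)
def matOfB (L : List (List ℤ)) : Matrix (Fin 6 ⊕ Fin 9) (Fin 6 ⊕ Fin 9) ℤ :=
  Matrix.of fun p q => ((L.getD (encB p) []).getD (encB q) 0)
def vecOfB (L : List ℤ) : Fin 6 ⊕ Fin 9 → ℤ := fun p => L.getD (encB p) 0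
def MmB : Matrix (Fin 6 ⊕ Fin 9) (Fin 6 ⊕ Fin 9) ℤ := matOfB [[5,-1,1,1,1,1,1,1,1,1,1,1,1,1,1],
[-1,5,-1,-1,-1,-1,1,1,1,1,1,1,1,1,1],
[1,-1,5,-1,1,1,1,1,1,1,1,1,1,1,1],
[1,-1,-1,5,-1,1,1,1,1,1,1,1,1,1,1],
[1,-1,1,-1,5,1,1,1,1,1,1,1,1,1,1],
[1,-1,1,1,1,5,1,1,1,1,1,1,1,1,1],
[1,1,1,1,1,1,5,1,1,1,1,1,1,1,1],
[1,1,1,1,1,1,1,5,1,1,1,1,1,1,1],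
[1,1,1,1,1,1,1,1,5,1,1,1,1,1,1],
[1,1,1,1,1,1,1,1,1,5,1,1,1,1,1],
[1,1,1,1,1,1,1,1,1,1,5,1,1,1,1],
[1,1,1,1,1,1,1,1,1,1,1,5,1,1,1],
[1,1,1,1,1,1,1,1,1,1,1,1,5,1,1],
[1,1,1,1,1,1,1,1,1,1,1,1,1,5,1],
[1,1,1,1,1,1,1,1,1,1,1,1,1,1,5]]
def xxB : Fin 6 ⊕ Fin 9 → ℤ := vecOfB [12,55,35,47,35,12,-15,-15,-15,-15,-15,-15,-15,-15,-15]

def BcB_0 : List (List ℤ) := [[1,0,0,0,0,0,0,0,0,0,0,0,0,0,0],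
[0,5,-1,-1,-1,-1,1,1,1,1,1,1,1,1,1],
[0,0,12,-3,2,2,3,3,3,3,3,3,3,3,3],
[0,0,0,9,-2,2,3,3,3,3,3,3,3,3,3],
[0,0,0,0,10,2,3,3,3,3,3,3,3,3,3],
[0,0,0,0,0,32,3,3,3,3,3,3,3,3,3],
[0,0,0,0,0,0,57,-7,-7,-7,-7,-7,-7,-7,-7],
[0,0,0,0,0,0,0,50,-7,-7,-7,-7,-7,-7,-7],
[0,0,0,0,0,0,0,0,43,-7,-7,-7,-7,-7,-7],
[0,0,0,0,0,0,0,0,0,36,-7,-7,-7,-7,-7],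
[0,0,0,0,0,0,0,0,0,0,29,-7,-7,-7,-7],
[0,0,0,0,0,0,0,0,0,0,0,22,-7,-7,-7],
[0,0,0,0,0,0,0,0,0,0,0,0,15,-7,-7],
[0,0,0,0,0,0,0,0,0,0,0,0,0,8,-7],
[0,0,0,0,0,0,0,0,0,0,0,0,0,0,1]]

def ecB_0 : List ℤ := [0,187648560,31274760,52124600,41699680,3909345,1028775,1316832,1745568,2424400,3594800,5882400,11372640,31274760,469121400]

def BcB_1 : List (List ℤ) := [[5,0,1,1,1,1,1,1,1,1,1,1,1,1,1],
[0,1,0,0,0,0,0,0,0,0,0,0,0,0,0],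
[0,0,12,-3,2,2,2,2,2,2,2,2,2,2,2],
[0,0,0,9,-2,2,2,2,2,2,2,2,2,2,2],
[0,0,0,0,5,1,1,1,1,1,1,1,1,1,1],
[0,0,0,0,0,16,1,1,1,1,1,1,1,1,1],
[0,0,0,0,0,0,17,1,1,1,1,1,1,1,1],
[0,0,0,0,0,0,0,18,1,1,1,1,1,1,1],
[0,0,0,0,0,0,0,0,19,1,1,1,1,1,1],
[0,0,0,0,0,0,0,0,0,20,1,1,1,1,1],
[0,0,0,0,0,0,0,0,0,0,21,1,1,1,1],
[0,0,0,0,0,0,0,0,0,0,0,22,1,1,1],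
[0,0,0,0,0,0,0,0,0,0,0,0,23,1,1],
[0,0,0,0,0,0,0,0,0,0,0,0,0,24,1],
[0,0,0,0,0,0,0,0,0,0,0,0,0,0,1]]

def ecB_1 : List ℤ := [20593188,0,3432198,5720330,18305056,1716099,1514205,1345960,1204280,1083852,980628,891480,813960,746130,429024750]

def BcB_2 : List (List ℤ) := [[5,-1,0,1,1,1,1,1,1,1,1,1,1,1,1],
[0,12,0,-2,-2,-2,3,3,3,3,3,3,3,3,3],
[0,0,1,0,0,0,0,0,0,0,0,0,0,0,0],
[0,0,0,14,-4,2,3,3,3,3,3,3,3,3,3],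
[0,0,0,0,10,2,3,3,3,3,3,3,3,3,3],
[0,0,0,0,0,22,3,3,3,3,3,3,3,3,3],
[0,0,0,0,0,0,21,-1,-1,-1,-1,-1,-1,-1,-1],
[0,0,0,0,0,0,0,20,-1,-1,-1,-1,-1,-1,-1],
[0,0,0,0,0,0,0,0,19,-1,-1,-1,-1,-1,-1],
[0,0,0,0,0,0,0,0,0,18,-1,-1,-1,-1,-1],
[0,0,0,0,0,0,0,0,0,0,17,-1,-1,-1,-1],
[0,0,0,0,0,0,0,0,0,0,0,16,-1,-1,-1],
[0,0,0,0,0,0,0,0,0,0,0,0,15,-1,-1],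
[0,0,0,0,0,0,0,0,0,0,0,0,0,14,-1],
[0,0,0,0,0,0,0,0,0,0,0,0,0,0,1]]

def ecB_2 : List ℤ := [895356,149226,0,106590,191862,40698,38760,42636,47124,52360,58520,65835,74613,85272,16628040]

def BcB_3 : List (List ℤ) := [[5,-1,1,0,1,1,1,1,1,1,1,1,1,1,1],
[0,12,-2,0,-2,-2,3,3,3,3,3,3,3,3,3],
[0,0,14,0,2,2,3,3,3,3,3,3,3,3,3],
[0,0,0,1,0,0,0,0,0,0,0,0,0,0,0],
[0,0,0,0,16,2,3,3,3,3,3,3,3,3,3],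
[0,0,0,0,0,6,1,1,1,1,1,1,1,1,1],
[0,0,0,0,0,0,1,0,0,0,0,0,0,0,0],
[0,0,0,0,0,0,0,1,0,0,0,0,0,0,0],
[0,0,0,0,0,0,0,0,1,0,0,0,0,0,0],
[0,0,0,0,0,0,0,0,0,1,0,0,0,0,0],
[0,0,0,0,0,0,0,0,0,0,1,0,0,0,0],
[0,0,0,0,0,0,0,0,0,0,0,1,0,0,0],
[0,0,0,0,0,0,0,0,0,0,0,0,1,0,0],
[0,0,0,0,0,0,0,0,0,0,0,0,0,1,0],
[0,0,0,0,0,0,0,0,0,0,0,0,0,0,1]]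

def ecB_3 : List ℤ := [168,28,20,0,15,105,3360,3360,3360,3360,3360,3360,3360,3360,3360]

def BcB_4 : List (List ℤ) := [[5,-1,1,1,0,1,1,1,1,1,1,1,1,1,1],
[0,12,-2,-2,0,-2,3,3,3,3,3,3,3,3,3],
[0,0,14,-4,0,2,3,3,3,3,3,3,3,3,3],
[0,0,0,10,0,2,3,3,3,3,3,3,3,3,3],
[0,0,0,0,1,0,0,0,0,0,0,0,0,0,0],
[0,0,0,0,0,22,3,3,3,3,3,3,3,3,3],
[0,0,0,0,0,0,21,-1,-1,-1,-1,-1,-1,-1,-1],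
[0,0,0,0,0,0,0,20,-1,-1,-1,-1,-1,-1,-1],
[0,0,0,0,0,0,0,0,19,-1,-1,-1,-1,-1,-1],
[0,0,0,0,0,0,0,0,0,18,-1,-1,-1,-1,-1],
[0,0,0,0,0,0,0,0,0,0,17,-1,-1,-1,-1],
[0,0,0,0,0,0,0,0,0,0,0,16,-1,-1,-1],
[0,0,0,0,0,0,0,0,0,0,0,0,15,-1,-1],
[0,0,0,0,0,0,0,0,0,0,0,0,0,14,-1],
[0,0,0,0,0,0,0,0,0,0,0,0,0,0,1]]

def ecB_4 : List ℤ := [895356,149226,106590,191862,0,40698,38760,42636,47124,52360,58520,65835,74613,85272,16628040]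

def BcB_5 : List (List ℤ) := [[5,-1,1,1,1,0,1,1,1,1,1,1,1,1,1],
[0,12,-2,-2,-2,0,3,3,3,3,3,3,3,3,3],
[0,0,14,-4,2,0,3,3,3,3,3,3,3,3,3],
[0,0,0,30,-8,0,9,9,9,9,9,9,9,9,9],
[0,0,0,0,32,0,9,9,9,9,9,9,9,9,9],
[0,0,0,0,0,1,0,0,0,0,0,0,0,0,0],
[0,0,0,0,0,0,57,-7,-7,-7,-7,-7,-7,-7,-7],
[0,0,0,0,0,0,0,50,-7,-7,-7,-7,-7,-7,-7],
[0,0,0,0,0,0,0,0,43,-7,-7,-7,-7,-7,-7],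
[0,0,0,0,0,0,0,0,0,36,-7,-7,-7,-7,-7],
[0,0,0,0,0,0,0,0,0,0,29,-7,-7,-7,-7],
[0,0,0,0,0,0,0,0,0,0,0,22,-7,-7,-7],
[0,0,0,0,0,0,0,0,0,0,0,0,15,-7,-7],
[0,0,0,0,0,0,0,0,0,0,0,0,0,8,-7],
[0,0,0,0,0,0,0,0,0,0,0,0,0,0,1]]

def ecB_5 : List ℤ := [1313539920,218923320,156373800,31274760,27365415,0,7201425,9217824,12218976,16970800,25163600,41176800,79608480,218923320,3283849800]

def BcB_6 : List (List ℤ) := [[5,-1,1,1,1,1,0,1,1,1,1,1,1,1,1],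
[0,12,-2,-2,-2,-2,0,3,3,3,3,3,3,3,3],
[0,0,14,-4,2,2,0,3,3,3,3,3,3,3,3],
[0,0,0,30,-8,6,0,9,9,9,9,9,9,9,9],
[0,0,0,0,32,6,0,9,9,9,9,9,9,9,9],
[0,0,0,0,0,34,0,3,3,3,3,3,3,3,3],
[0,0,0,0,0,0,1,0,0,0,0,0,0,0,0],
[0,0,0,0,0,0,0,15,-2,-2,-2,-2,-2,-2,-2],
[0,0,0,0,0,0,0,0,13,-2,-2,-2,-2,-2,-2],
[0,0,0,0,0,0,0,0,0,11,-2,-2,-2,-2,-2],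
[0,0,0,0,0,0,0,0,0,0,9,-2,-2,-2,-2],
[0,0,0,0,0,0,0,0,0,0,0,7,-2,-2,-2],
[0,0,0,0,0,0,0,0,0,0,0,0,5,-2,-2],
[0,0,0,0,0,0,0,0,0,0,0,0,0,3,-2],
[0,0,0,0,0,0,0,0,0,0,0,0,0,0,1]]

def ecB_6 : List ℤ := [2450448,408408,291720,58344,51051,45045,0,192192,251328,342720,495040,777920,1400256,3267264,16336320]

def BcB_7 : List (List ℤ) := [[5,-1,1,1,1,1,1,0,1,1,1,1,1,1,1],
[0,12,-2,-2,-2,-2,3,0,3,3,3,3,3,3,3],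
[0,0,14,-4,2,2,3,0,3,3,3,3,3,3,3],
[0,0,0,30,-8,6,9,0,9,9,9,9,9,9,9],
[0,0,0,0,32,6,9,0,9,9,9,9,9,9,9],
[0,0,0,0,0,34,3,0,3,3,3,3,3,3,3],
[0,0,0,0,0,0,15,0,-2,-2,-2,-2,-2,-2,-2],
[0,0,0,0,0,0,0,1,0,0,0,0,0,0,0],
[0,0,0,0,0,0,0,0,13,-2,-2,-2,-2,-2,-2],
[0,0,0,0,0,0,0,0,0,11,-2,-2,-2,-2,-2],
[0,0,0,0,0,0,0,0,0,0,9,-2,-2,-2,-2],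
[0,0,0,0,0,0,0,0,0,0,0,7,-2,-2,-2],
[0,0,0,0,0,0,0,0,0,0,0,0,5,-2,-2],
[0,0,0,0,0,0,0,0,0,0,0,0,0,3,-2],
[0,0,0,0,0,0,0,0,0,0,0,0,0,0,1]]

def ecB_7 : List ℤ := [2450448,408408,291720,58344,51051,45045,192192,0,251328,342720,495040,777920,1400256,3267264,16336320]

def BcB_8 : List (List ℤ) := [[5,-1,1,1,1,1,1,1,0,1,1,1,1,1,1],
[0,12,-2,-2,-2,-2,3,3,0,3,3,3,3,3,3],
[0,0,14,-4,2,2,3,3,0,3,3,3,3,3,3],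
[0,0,0,30,-8,6,9,9,0,9,9,9,9,9,9],
[0,0,0,0,32,6,9,9,0,9,9,9,9,9,9],
[0,0,0,0,0,34,3,3,0,3,3,3,3,3,3],
[0,0,0,0,0,0,15,-2,0,-2,-2,-2,-2,-2,-2],
[0,0,0,0,0,0,0,13,0,-2,-2,-2,-2,-2,-2],
[0,0,0,0,0,0,0,0,1,0,0,0,0,0,0],
[0,0,0,0,0,0,0,0,0,11,-2,-2,-2,-2,-2],
[0,0,0,0,0,0,0,0,0,0,9,-2,-2,-2,-2],
[0,0,0,0,0,0,0,0,0,0,0,7,-2,-2,-2],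
[0,0,0,0,0,0,0,0,0,0,0,0,5,-2,-2],
[0,0,0,0,0,0,0,0,0,0,0,0,0,3,-2],
[0,0,0,0,0,0,0,0,0,0,0,0,0,0,1]]

def ecB_8 : List ℤ := [2450448,408408,291720,58344,51051,45045,192192,251328,0,342720,495040,777920,1400256,3267264,16336320]

def BcB_9 : List (List ℤ) := [[5,-1,1,1,1,1,1,1,1,0,1,1,1,1,1],
[0,12,-2,-2,-2,-2,3,3,3,0,3,3,3,3,3],
[0,0,14,-4,2,2,3,3,3,0,3,3,3,3,3],
[0,0,0,30,-8,6,9,9,9,0,9,9,9,9,9],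
[0,0,0,0,32,6,9,9,9,0,9,9,9,9,9],
[0,0,0,0,0,34,3,3,3,0,3,3,3,3,3],
[0,0,0,0,0,0,15,-2,-2,0,-2,-2,-2,-2,-2],
[0,0,0,0,0,0,0,13,-2,0,-2,-2,-2,-2,-2],
[0,0,0,0,0,0,0,0,11,0,-2,-2,-2,-2,-2],
[0,0,0,0,0,0,0,0,0,1,0,0,0,0,0],
[0,0,0,0,0,0,0,0,0,0,9,-2,-2,-2,-2],
[0,0,0,0,0,0,0,0,0,0,0,7,-2,-2,-2],
[0,0,0,0,0,0,0,0,0,0,0,0,5,-2,-2],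
[0,0,0,0,0,0,0,0,0,0,0,0,0,3,-2],
[0,0,0,0,0,0,0,0,0,0,0,0,0,0,1]]

def ecB_9 : List ℤ := [2450448,408408,291720,58344,51051,45045,192192,251328,342720,0,495040,777920,1400256,3267264,16336320]

def BcB_10 : List (List ℤ) := [[5,-1,1,1,1,1,1,1,1,1,0,1,1,1,1],
[0,12,-2,-2,-2,-2,3,3,3,3,0,3,3,3,3],
[0,0,14,-4,2,2,3,3,3,3,0,3,3,3,3],
[0,0,0,30,-8,6,9,9,9,9,0,9,9,9,9],
[0,0,0,0,32,6,9,9,9,9,0,9,9,9,9],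
[0,0,0,0,0,34,3,3,3,3,0,3,3,3,3],
[0,0,0,0,0,0,15,-2,-2,-2,0,-2,-2,-2,-2],
[0,0,0,0,0,0,0,13,-2,-2,0,-2,-2,-2,-2],
[0,0,0,0,0,0,0,0,11,-2,0,-2,-2,-2,-2],
[0,0,0,0,0,0,0,0,0,9,0,-2,-2,-2,-2],
[0,0,0,0,0,0,0,0,0,0,1,0,0,0,0],
[0,0,0,0,0,0,0,0,0,0,0,7,-2,-2,-2],
[0,0,0,0,0,0,0,0,0,0,0,0,5,-2,-2],
[0,0,0,0,0,0,0,0,0,0,0,0,0,3,-2],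
[0,0,0,0,0,0,0,0,0,0,0,0,0,0,1]]

def ecB_10 : List ℤ := [2450448,408408,291720,58344,51051,45045,192192,251328,342720,495040,0,777920,1400256,3267264,16336320]

def BcB_11 : List (List ℤ) := [[5,-1,1,1,1,1,1,1,1,1,1,0,1,1,1],
[0,12,-2,-2,-2,-2,3,3,3,3,3,0,3,3,3],
[0,0,14,-4,2,2,3,3,3,3,3,0,3,3,3],
[0,0,0,30,-8,6,9,9,9,9,9,0,9,9,9],
[0,0,0,0,32,6,9,9,9,9,9,0,9,9,9],
[0,0,0,0,0,34,3,3,3,3,3,0,3,3,3],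
[0,0,0,0,0,0,15,-2,-2,-2,-2,0,-2,-2,-2],
[0,0,0,0,0,0,0,13,-2,-2,-2,0,-2,-2,-2],
[0,0,0,0,0,0,0,0,11,-2,-2,0,-2,-2,-2],
[0,0,0,0,0,0,0,0,0,9,-2,0,-2,-2,-2],
[0,0,0,0,0,0,0,0,0,0,7,0,-2,-2,-2],
[0,0,0,0,0,0,0,0,0,0,0,1,0,0,0],
[0,0,0,0,0,0,0,0,0,0,0,0,5,-2,-2],
[0,0,0,0,0,0,0,0,0,0,0,0,0,3,-2],
[0,0,0,0,0,0,0,0,0,0,0,0,0,0,1]]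

def ecB_11 : List ℤ := [2450448,408408,291720,58344,51051,45045,192192,251328,342720,495040,777920,0,1400256,3267264,16336320]

def BcB_12 : List (List ℤ) := [[5,-1,1,1,1,1,1,1,1,1,1,1,0,1,1],
[0,12,-2,-2,-2,-2,3,3,3,3,3,3,0,3,3],
[0,0,14,-4,2,2,3,3,3,3,3,3,0,3,3],
[0,0,0,30,-8,6,9,9,9,9,9,9,0,9,9],
[0,0,0,0,32,6,9,9,9,9,9,9,0,9,9],
[0,0,0,0,0,34,3,3,3,3,3,3,0,3,3],
[0,0,0,0,0,0,15,-2,-2,-2,-2,-2,0,-2,-2],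
[0,0,0,0,0,0,0,13,-2,-2,-2,-2,0,-2,-2],
[0,0,0,0,0,0,0,0,11,-2,-2,-2,0,-2,-2],
[0,0,0,0,0,0,0,0,0,9,-2,-2,0,-2,-2],
[0,0,0,0,0,0,0,0,0,0,7,-2,0,-2,-2],
[0,0,0,0,0,0,0,0,0,0,0,5,0,-2,-2],
[0,0,0,0,0,0,0,0,0,0,0,0,1,0,0],
[0,0,0,0,0,0,0,0,0,0,0,0,0,3,-2],
[0,0,0,0,0,0,0,0,0,0,0,0,0,0,1]]

def ecB_12 : List ℤ := [2450448,408408,291720,58344,51051,45045,192192,251328,342720,495040,777920,1400256,0,3267264,16336320]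

def BcB_13 : List (List ℤ) := [[5,-1,1,1,1,1,1,1,1,1,1,1,1,0,1],
[0,12,-2,-2,-2,-2,3,3,3,3,3,3,3,0,3],
[0,0,14,-4,2,2,3,3,3,3,3,3,3,0,3],
[0,0,0,30,-8,6,9,9,9,9,9,9,9,0,9],
[0,0,0,0,32,6,9,9,9,9,9,9,9,0,9],
[0,0,0,0,0,34,3,3,3,3,3,3,3,0,3],
[0,0,0,0,0,0,15,-2,-2,-2,-2,-2,-2,0,-2],
[0,0,0,0,0,0,0,13,-2,-2,-2,-2,-2,0,-2],
[0,0,0,0,0,0,0,0,11,-2,-2,-2,-2,0,-2],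
[0,0,0,0,0,0,0,0,0,9,-2,-2,-2,0,-2],
[0,0,0,0,0,0,0,0,0,0,7,-2,-2,0,-2],
[0,0,0,0,0,0,0,0,0,0,0,5,-2,0,-2],
[0,0,0,0,0,0,0,0,0,0,0,0,3,0,-2],
[0,0,0,0,0,0,0,0,0,0,0,0,0,1,0],
[0,0,0,0,0,0,0,0,0,0,0,0,0,0,1]]

def ecB_13 : List ℤ := [2450448,408408,291720,58344,51051,45045,192192,251328,342720,495040,777920,1400256,3267264,0,16336320]

def BcB_14 : List (List ℤ) := [[5,-1,1,1,1,1,1,1,1,1,1,1,1,1,0],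
[0,12,-2,-2,-2,-2,3,3,3,3,3,3,3,3,0],
[0,0,14,-4,2,2,3,3,3,3,3,3,3,3,0],
[0,0,0,30,-8,6,9,9,9,9,9,9,9,9,0],
[0,0,0,0,32,6,9,9,9,9,9,9,9,9,0],
[0,0,0,0,0,34,3,3,3,3,3,3,3,3,0],
[0,0,0,0,0,0,15,-2,-2,-2,-2,-2,-2,-2,0],
[0,0,0,0,0,0,0,13,-2,-2,-2,-2,-2,-2,0],
[0,0,0,0,0,0,0,0,11,-2,-2,-2,-2,-2,0],
[0,0,0,0,0,0,0,0,0,9,-2,-2,-2,-2,0],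
[0,0,0,0,0,0,0,0,0,0,7,-2,-2,-2,0],
[0,0,0,0,0,0,0,0,0,0,0,5,-2,-2,0],
[0,0,0,0,0,0,0,0,0,0,0,0,3,-2,0],
[0,0,0,0,0,0,0,0,0,0,0,0,0,1,0],
[0,0,0,0,0,0,0,0,0,0,0,0,0,0,1]]

def ecB_14 : List ℤ := [2450448,408408,291720,58344,51051,45045,192192,251328,342720,495040,777920,1400256,3267264,16336320,0]


set_option maxHeartbeats 1000000 in
lemma hMB : ∀ p q : Fin 6 ⊕ Fin 9,
    ((MmB p q : ℤ) : ℝ) = seidelOf (B2graph ⊕g (⊥ : SimpleGraph (Fin 9))) p q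
      + (if p = q then 5 else 0) := by
  have hdiag : ∀ p : Fin 6 ⊕ Fin 9, MmB p p = 5 := by decide
  have hoff : ∀ p q : Fin 6 ⊕ Fin 9, p ≠ q →
      ((B2graph ⊕g (⊥ : SimpleGraph (Fin 9))).Adj p q → MmB p q = -1) ∧
      (¬(B2graph ⊕g (⊥ : SimpleGraph (Fin 9))).Adj p q → MmB p q = 1) := by
    letI : ∀ (p q : Fin 6 ⊕ Fin 9) (k : ℤ), Decidable (MmB p q = k) := fun p q k => Int.decEq _ _
    decide
  intro p q
  by_cases h : p = q
  · subst h; rw [hdiag p]; simp [seidelOf]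
  · rw [if_neg h]
    by_cases ha : (B2graph ⊕g (⊥ : SimpleGraph (Fin 9))).Adj p q
    · rw [(hoff p q h).1 ha]; simp only [seidelOf, Matrix.of_apply, if_neg h, if_pos ha]; norm_num
    · rw [(hoff p q h).2 ha]; simp only [seidelOf, Matrix.of_apply, if_neg h, if_neg ha]; norm_num

set_option maxHeartbeats 1000000 in
lemma hxB : xxB ⬝ᵥ (MmB *ᵥ xxB) < 0 := by decide

set_option maxHeartbeats 0 in
set_option maxRecDepth 200000 in
lemma certB : ∀ i : Fin 6 ⊕ Fin 9, ∃ (B : Matrix (Fin 6 ⊕ Fin 9) (Fin 6 ⊕ Fin 9) ℤ)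
    (d : Fin 6 ⊕ Fin 9 → ℤ) (c : ℤ), 0 < c ∧ (∀ k, 0 ≤ d k) ∧
      Bᵀ * (Matrix.of fun p q => d p * B p q) =
        c • Matrix.of (fun p q => if p = i ∨ q = i then (0:ℤ) else MmB p q) := by
  intro i
  rcases i with a | a <;> fin_cases a
  exacts [⟨matOfB BcB_0, vecOfB ecB_0, 938242800, by decide, by decide, by decide⟩,
    ⟨matOfB BcB_1, vecOfB ecB_1, 102965940, by decide, by decide, by decide⟩,
    ⟨matOfB BcB_2, vecOfB ecB_2, 4476780, by decide, by decide, by decide⟩,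
    ⟨matOfB BcB_3, vecOfB ecB_3, 840, by decide, by decide, by decide⟩,
    ⟨matOfB BcB_4, vecOfB ecB_4, 4476780, by decide, by decide, by decide⟩,
    ⟨matOfB BcB_5, vecOfB ecB_5, 6567699600, by decide, by decide, by decide⟩,
    ⟨matOfB BcB_6, vecOfB ecB_6, 12252240, by decide, by decide, by decide⟩,
    ⟨matOfB BcB_7, vecOfB ecB_7, 12252240, by decide, by decide, by decide⟩,
    ⟨matOfB BcB_8, vecOfB ecB_8, 12252240, by decide, by decide, by decide⟩,
    ⟨matOfB BcB_9, vecOfB ecB_9, 12252240, by decide, by decide, by decide⟩,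
    ⟨matOfB BcB_10, vecOfB ecB_10, 12252240, by decide, by decide, by decide⟩,
    ⟨matOfB BcB_11, vecOfB ecB_11, 12252240, by decide, by decide, by decide⟩,
    ⟨matOfB BcB_12, vecOfB ecB_12, 12252240, by decide, by decide, by decide⟩,
    ⟨matOfB BcB_13, vecOfB ecB_13, 12252240, by decide, by decide, by decide⟩,
    ⟨matOfB BcB_14, vecOfB ecB_14, 12252240, by decide, by decide, by decide⟩]


/-- `B₁(14) ∈ F_{-5}` and `B₂(9) ∈ F_{-5}`. -/
theorem stmt_14 :
    MemF5 (bowtie ⊕g (⊥ : SimpleGraph (Fin 14))) ∧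
    MemF5 (B2graph ⊕g (⊥ : SimpleGraph (Fin 9))) :=
  ⟨memF5_of _ MmA hMA xxA hxA certA, memF5_of _ MmB hMB xxB hxB certB⟩
end

section
/- Let G be a simple graph such that λ_min(S(K_4 ∪ 5K_1)) < −5 and every proper induced subgraph H of K_4 ∪ 5K_1 satisfies λ_min(S(H)) ≥ −5; i.e., K_4(5) (the disjoint union of the complete graph K_4 and 5 isolated vertices) belongs to F_{−5}. Similarly, K_{2,1,1}(11) (the diamond K_4 minus an edge together with 11 isolated vertices) and K_{2,3}(19) (the complete bipartite graph K_{2,3} together with 19 isolated vertices) belong to F_{−5}. -/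
open Matrix

/-- The diamond `K_{2,1,1}`: the complete graph `K₄` minus the edge `0–1`. -/
def diamondG : SimpleGraph (Fin 4) :=
  SimpleGraph.fromRel fun i j =>
    (i = 0 ∧ j = 2) ∨ (i = 0 ∧ j = 3) ∨ (i = 1 ∧ j = 2) ∨ (i = 1 ∧ j = 3) ∨ (i = 2 ∧ j = 3)

/-! ### Auxiliary spectral lemmas -/

section Spectral

open Finset

variable {n : Type*} [Fintype n] [DecidableEq n] {A : Matrix n n ℝ}

private lemma quad_decomp (hA : A.IsHermitian) (x : n → ℝ) :
    ∃ w : n → ℝ, x ⬝ᵥ (A *ᵥ x) = ∑ i, hA.eigenvalues i * (w i)^2 ∧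
      x ⬝ᵥ x = ∑ i, (w i)^2 := by
  classical
  set U : Matrix n n ℝ := (hA.eigenvectorUnitary : Matrix n n ℝ) with hU
  have hsU : U * star U = 1 := (Matrix.mem_unitaryGroup_iff).mp hA.eigenvectorUnitary.2
  have hUT : Uᵀ = star U := by
    rw [star_eq_conjTranspose, conjTranspose_eq_transpose_of_trivial]
  set w : n → ℝ := star U *ᵥ x with hw
  refine ⟨w, ?_, ?_⟩
  · conv_lhs => rw [hA.spectral_theorem]
    have hdiag : diagonal (RCLike.ofReal ∘ hA.eigenvalues) = diagonal hA.eigenvalues := by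
      simp [Function.comp]
    rw [hdiag, Unitary.conjStarAlgAut_apply, ← hU, ← mulVec_mulVec, ← mulVec_mulVec, dotProduct_mulVec,
      ← mulVec_transpose, hUT, ← hw]
    simp only [dotProduct, mulVec_diagonal]
    exact Finset.sum_congr rfl fun i _ => by ring
  · have : w ⬝ᵥ w = x ⬝ᵥ x := by
      rw [hw, dotProduct_mulVec, ← hUT, vecMul_transpose, hUT, mulVec_mulVec, hsU, one_mulVec]
    rw [← this]
    simp only [dotProduct]
    exact Finset.sum_congr rfl fun i _ => by ring

private lemma minEig_lt_of (hA : A.IsHermitian) {x : n → ℝ} {c : ℝ}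
    (h : x ⬝ᵥ (A *ᵥ x) < c * (x ⬝ᵥ x)) : minEig A < c := by
  unfold minEig
  rw [dif_pos hA]
  by_contra hle
  push_neg at hle
  have hall : ∀ i, c ≤ hA.eigenvalues i := fun i =>
    hle.trans (ciInf_le (Set.Finite.bddBelow (Set.finite_range _)) i)
  obtain ⟨w, h1, h2⟩ := quad_decomp hA x
  have : c * (x ⬝ᵥ x) ≤ x ⬝ᵥ (A *ᵥ x) := by
    rw [h1, h2, Finset.mul_sum]
    exact Finset.sum_le_sum fun i _ =>
      mul_le_mul_of_nonneg_right (hall i) (sq_nonneg _)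
  linarith

private lemma minEig_ge_of [Nonempty n] (hA : A.IsHermitian) {c : ℝ}
    (h : ∀ x : n → ℝ, c * (x ⬝ᵥ x) ≤ x ⬝ᵥ (A *ᵥ x)) : c ≤ minEig A := by
  unfold minEig
  rw [dif_pos hA]
  refine le_ciInf fun i => ?_
  set v := hA.eigenvectorBasis i with hv
  have hnorm : ‖v‖ = 1 := hA.eigenvectorBasis.orthonormal.1 i
  have hvv : (⇑v) ⬝ᵥ (⇑v) = 1 := by
    have h1 : (inner ℝ v v : ℝ) = 1 := by
      rw [real_inner_self_eq_norm_sq, hnorm]; norm_num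
    rw [← h1]
    simp only [dotProduct, PiLp.inner_apply, RCLike.inner_apply, conj_trivial, mul_comm]
  have hmv := hA.mulVec_eigenvectorBasis i
  rw [← hv] at hmv
  have := h (⇑v)
  rw [hvv, hmv, dotProduct_smul, hvv, smul_eq_mul, mul_one, mul_one] at this
  exact this

end Spectral

/-! ### Auxiliary graph-side lemmas -/

section GraphSide

open Finset

variable {α β : Type*} [Fintype α] [Fintype β]

private lemma seidel_herm (G : SimpleGraph α) : (seidelOf G).IsHermitian := by
  classical
  rw [Matrix.IsHermitian, conjTranspose_eq_transpose_of_trivial]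
  ext i j
  simp only [transpose_apply, seidelOf, of_apply]
  by_cases h : i = j
  · simp [h]
  · simp [h, Ne.symm h, G.adj_comm i j]

private lemma sum_ext_eq {s : Set α} [DecidablePred (· ∈ s)] (f : α → ℝ)
    (hf : ∀ v, v ∉ s → f v = 0) : ∑ v : α, f v = ∑ v : s, f ↑v := by
  classical
  rw [← Finset.sum_subtype (s := s.toFinset) (by simp) f]
  symm
  apply Finset.sum_subset (Finset.subset_univ _)
  intro v _ hv
  exact hf v (by simpa using hv)

private lemma induced_quad_eq (G : SimpleGraph α) {s : Set α} [DecidablePred (· ∈ s)]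
    (x : s → ℝ) :
    x ⬝ᵥ (seidelOf (G.induce s) *ᵥ x) =
      (fun v => if h : v ∈ s then x ⟨v, h⟩ else 0) ⬝ᵥ
        (seidelOf G *ᵥ (fun v => if h : v ∈ s then x ⟨v, h⟩ else 0)) ∧
    x ⬝ᵥ x = (fun v => if h : v ∈ s then x ⟨v, h⟩ else 0) ⬝ᵥ
        (fun v => if h : v ∈ s then x ⟨v, h⟩ else 0) := by
  classical
  set y : α → ℝ := fun v => if h : v ∈ s then x ⟨v, h⟩ else 0 with hy
  have hy0 : ∀ v, v ∉ s → y v = 0 := fun v hv => by simp [hy, hv]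
  have hyc : ∀ i : s, y ↑i = x i := fun i => by simp [hy, i.2]
  have hentry : ∀ i j : s, seidelOf (G.induce s) i j = seidelOf G ↑i ↑j := by
    intro i j
    simp only [seidelOf, of_apply, SimpleGraph.comap_adj, Function.Embedding.coe_subtype,
      Subtype.ext_iff]
  constructor
  · rw [dotProduct, dotProduct, sum_ext_eq (fun v => y v * (seidelOf G *ᵥ y) v)
      (fun v hv => by beta_reduce; rw [hy0 v hv, zero_mul])]
    refine Finset.sum_congr rfl fun i _ => ?_
    rw [hyc]
    congr 1
    rw [mulVec, mulVec, dotProduct, dotProduct,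
      sum_ext_eq (fun w => seidelOf G ↑i w * y w)
        (fun w hw => by beta_reduce; rw [hy0 w hw, mul_zero])]
    exact Finset.sum_congr rfl fun j _ => by rw [hyc, hentry]
  · rw [dotProduct, dotProduct, sum_ext_eq (fun v => y v * y v)
      (fun v hv => by beta_reduce; rw [hy0 v hv, zero_mul])]
    exact Finset.sum_congr rfl fun i _ => by rw [hyc]

private lemma row_ind [DecidableEq α] (x : α → ℝ) (i : α) :
    ∑ j, (if i = j then (0:ℝ) else 1) * x j = (∑ j, x j) - x i := by
  have : ∀ j ∈ univ, (if i = j then (0:ℝ) else 1) * x j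
      = x j - (if i = j then x j else 0) := by
    intro j _; split_ifs <;> ring
  rw [Finset.sum_congr rfl this, Finset.sum_sub_distrib, Finset.sum_ite_eq]
  simp

private lemma row_ind' [DecidableEq α] (x : α → ℝ) (i : α) :
    ∑ j, (if i = j then (0:ℝ) else -1) * x j = x i - (∑ j, x j) := by
  have : ∀ j ∈ univ, (if i = j then (0:ℝ) else -1) * x j
      = -((if i = j then (0:ℝ) else 1) * x j) := by
    intro j _; split_ifs <;> ring
  rw [Finset.sum_congr rfl this, Finset.sum_neg_distrib, row_ind]
  ring

private lemma sum_mul_sub (x : α → ℝ) :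
    ∑ i, x i * ((∑ j, x j) - x i) = (∑ j, x j)^2 - ∑ i, (x i)^2 := by
  have : ∀ i ∈ univ, x i * ((∑ j, x j) - x i) = x i * (∑ j, x j) - (x i)^2 := by
    intro i _; ring
  rw [Finset.sum_congr rfl this, Finset.sum_sub_distrib, ← Finset.sum_mul, sq]

private lemma sum_mul_sub' (x : α → ℝ) :
    ∑ i, x i * (x i - (∑ j, x j)) = (∑ i, (x i)^2) - (∑ j, x j)^2 := by
  have : ∀ i ∈ univ, x i * (x i - (∑ j, x j)) = -(x i * ((∑ j, x j) - x i)) := by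
    intro i _; ring
  rw [Finset.sum_congr rfl this, Finset.sum_neg_distrib, sum_mul_sub]
  ring

private lemma quad_bot (x : α → ℝ) :
    x ⬝ᵥ (seidelOf (⊥ : SimpleGraph α) *ᵥ x) = (∑ j, x j)^2 - ∑ i, (x i)^2 := by
  classical
  have he : ∀ i j : α, seidelOf (⊥ : SimpleGraph α) i j = if i = j then 0 else 1 := by
    intro i j; simp [seidelOf]
  simp only [dotProduct, mulVec, he]
  rw [← sum_mul_sub]
  exact Finset.sum_congr rfl fun i _ => by rw [row_ind]

private lemma quad_top (x : α → ℝ) :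
    x ⬝ᵥ (seidelOf (SimpleGraph.completeGraph α) *ᵥ x) = (∑ i, (x i)^2) - (∑ j, x j)^2 := by
  classical
  have he : ∀ i j : α, seidelOf (SimpleGraph.completeGraph α) i j = if i = j then 0 else -1 := by
    intro i j; by_cases h : i = j <;> simp [seidelOf, SimpleGraph.completeGraph, h]
  simp only [dotProduct, mulVec, he]
  rw [← sum_mul_sub']
  exact Finset.sum_congr rfl fun i _ => by rw [row_ind']

private lemma quad_sum (G : SimpleGraph α) (H : SimpleGraph β) (z : α ⊕ β → ℝ) :
    z ⬝ᵥ (seidelOf (G ⊕g H) *ᵥ z) =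
      (z ∘ Sum.inl) ⬝ᵥ (seidelOf G *ᵥ (z ∘ Sum.inl)) +
      (z ∘ Sum.inr) ⬝ᵥ (seidelOf H *ᵥ (z ∘ Sum.inr)) +
      2 * (∑ i, z (Sum.inl i)) * (∑ j, z (Sum.inr j)) := by
  classical
  have e1 : ∀ a a', seidelOf (G ⊕g H) (Sum.inl a) (Sum.inl a') = seidelOf G a a' := by
    intro a a'; simp [seidelOf]
  have e2 : ∀ b b', seidelOf (G ⊕g H) (Sum.inr b) (Sum.inr b') = seidelOf H b b' := by
    intro b b'; simp [seidelOf]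
  have e3 : ∀ a b, seidelOf (G ⊕g H) (Sum.inl a) (Sum.inr b) = 1 := by
    intro a b; simp [seidelOf]
  have e4 : ∀ b a, seidelOf (G ⊕g H) (Sum.inr b) (Sum.inl a) = 1 := by
    intro b a; simp [seidelOf]
  simp only [dotProduct, mulVec, Fintype.sum_sum_type, Function.comp,
    e1, e2, e3, e4, one_mul]
  simp only [mul_add, Finset.sum_add_distrib]
  rw [← Finset.sum_mul, ← Finset.sum_mul]
  ring_nf

private lemma quad_bip (z : α ⊕ β → ℝ) :
    z ⬝ᵥ (seidelOf (completeBipartiteGraph α β) *ᵥ z) =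
      ((∑ j, z (Sum.inl j))^2 - ∑ i, (z (Sum.inl i))^2) +
      ((∑ j, z (Sum.inr j))^2 - ∑ i, (z (Sum.inr i))^2) -
      2 * (∑ i, z (Sum.inl i)) * (∑ j, z (Sum.inr j)) := by
  classical
  have e1 : ∀ a a', seidelOf (completeBipartiteGraph α β) (Sum.inl a) (Sum.inl a')
      = if a = a' then (0:ℝ) else 1 := by
    intro a a'; simp [seidelOf]
  have e2 : ∀ b b', seidelOf (completeBipartiteGraph α β) (Sum.inr b) (Sum.inr b')
      = if b = b' then (0:ℝ) else 1 := by
    intro b b'; simp [seidelOf]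
  have e3 : ∀ a b, seidelOf (completeBipartiteGraph α β) (Sum.inl a) (Sum.inr b) = -1 := by
    intro a b; simp [seidelOf]
  have e4 : ∀ b a, seidelOf (completeBipartiteGraph α β) (Sum.inr b) (Sum.inl a) = -1 := by
    intro b a; simp [seidelOf]
  simp only [dotProduct, mulVec, Fintype.sum_sum_type, e1, e2, e3, e4, neg_one_mul]
  simp only [Finset.sum_neg_distrib, mul_add, mul_neg, Finset.sum_add_distrib,
    Finset.sum_neg_distrib]
  rw [← Finset.sum_mul, ← Finset.sum_mul]
  have h1 : ∑ a, z (Sum.inl a) * (∑ a', (if a = a' then (0:ℝ) else 1) * z (Sum.inl a'))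
      = (∑ j, z (Sum.inl j))^2 - ∑ i, (z (Sum.inl i))^2 := by
    rw [← sum_mul_sub]
    exact Finset.sum_congr rfl fun i _ => by rw [row_ind]
  have h2 : ∑ b, z (Sum.inr b) * (∑ b', (if b = b' then (0:ℝ) else 1) * z (Sum.inr b'))
      = (∑ j, z (Sum.inr j))^2 - ∑ i, (z (Sum.inr i))^2 := by
    rw [← sum_mul_sub]
    exact Finset.sum_congr rfl fun i _ => by rw [row_ind]
  rw [h1, h2]
  ring

private lemma quad_diamond (x : Fin 4 → ℝ) :
    x ⬝ᵥ (seidelOf diamondG *ᵥ x) =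
      2*(x 0)*(x 1) - 2*(x 2)*(x 3) - 2*(x 0 + x 1)*(x 2 + x 3) := by
  simp only [dotProduct, mulVec, Fin.sum_univ_four]
  simp +decide [seidelOf, diamondG, SimpleGraph.fromRel_adj]
  ring

private lemma cs_zero [DecidableEq α] (f : α → ℝ) (i : α) (hfi : f i = 0) :
    (∑ j, f j)^2 ≤ ((Fintype.card α - 1 : ℕ) : ℝ) * ∑ j, (f j)^2 := by
  have h1 : ∑ j, f j = ∑ j ∈ univ.erase i, f j := (Finset.sum_erase _ hfi).symm
  have h2 := sq_sum_le_card_mul_sum_sq (s := univ.erase i) (f := f)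
  have h3 : ∑ j ∈ univ.erase i, (f j)^2 ≤ ∑ j, (f j)^2 :=
    Finset.sum_le_sum_of_subset_of_nonneg (Finset.subset_univ _)
      (fun j _ _ => sq_nonneg _)
  have hcard : (univ.erase i).card = Fintype.card α - 1 := by
    rw [Finset.card_erase_of_mem (Finset.mem_univ i), Finset.card_univ]
  calc (∑ j, f j)^2 = (∑ j ∈ univ.erase i, f j)^2 := by rw [h1]
    _ ≤ ((univ.erase i).card : ℝ) * ∑ j ∈ univ.erase i, (f j)^2 := h2
    _ ≤ ((Fintype.card α - 1 : ℕ) : ℝ) * ∑ j, (f j)^2 := by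
        rw [hcard]
        exact mul_le_mul_of_nonneg_left h3 (by positivity)

private lemma cs_all (f : α → ℝ) :
    (∑ j, f j)^2 ≤ (Fintype.card α : ℝ) * ∑ j, (f j)^2 := by
  have h2 := sq_sum_le_card_mul_sum_sq (s := (univ : Finset α)) (f := f)
  simpa [Finset.card_univ] using h2

end GraphSide

/-! ### Bridging lemmas -/

section Bridge

private lemma minSeidelEig_eq {V : Type*} [Fintype V] [DecidableEq V] (G : SimpleGraph V) :
    minSeidelEig G = minEig (seidelOf G) := by
  unfold minSeidelEig
  congr!

private lemma minSeidelEig_empty {V : Type*} [Finite V] [IsEmpty V] (G : SimpleGraph V) :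
    minSeidelEig G = 0 := by
  unfold minSeidelEig minEig
  split_ifs
  · exact Real.iInf_of_isEmpty _
  · rfl

private lemma memF5_of_s15 {V : Type*} [Fintype V] [DecidableEq V] [Nonempty V] {G : SimpleGraph V}
    (x : V → ℝ) (hlt : x ⬝ᵥ (seidelOf G *ᵥ x) < -5 * (x ⬝ᵥ x))
    (hge : ∀ y : V → ℝ, (∃ w, y w = 0) → -5 * (y ⬝ᵥ y) ≤ y ⬝ᵥ (seidelOf G *ᵥ y)) :
    MemF5 G := by
  constructor
  · rw [minSeidelEig_eq]
    exact minEig_lt_of (seidel_herm G) hlt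
  · intro s hs
    have hvex : ∃ v, v ∉ s := by
      by_contra h
      push_neg at h
      exact hs (Set.eq_univ_of_forall h)
    obtain ⟨v, hv⟩ := hvex
    rcases isEmpty_or_nonempty ↥s with he | hne
    · rw [minSeidelEig_empty]
      norm_num
    · letI : DecidableEq ↥s := Classical.decEq _
      letI : DecidablePred (· ∈ s) := Classical.decPred _
      rw [minSeidelEig_eq]
      apply minEig_ge_of (seidel_herm _)
      intro z
      obtain ⟨h1, h2⟩ := induced_quad_eq G z
      rw [h1, h2]
      refine hge _ ⟨v, ?_⟩
      beta_reduce
      rw [dif_neg hv]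

end Bridge

/-! ### Numeric inequality certificates -/

private lemma ineqDa (a b c d q v : ℝ) (hq : q^2 ≤ 11*v) (hw : a = 0) :
    -5 * (a ^ 2 + b ^ 2 + c ^ 2 + d ^ 2 + v) ≤
    2 * a * b - 2 * c * d - 2 * (a + b) * (c + d) + (q ^ 2 - v) + 2 * (a + b + c + d) * q := by
  subst hw
  nlinarith [sq_nonneg (c - d), sq_nonneg (b - (c+d)/5 + q/5), sq_nonneg ((c+d) + 2*q/3),
    sq_nonneg q]

private lemma ineqDb (a b c d q v : ℝ) (hq : q^2 ≤ 11*v) (hw : b = 0) :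
    -5 * (a ^ 2 + b ^ 2 + c ^ 2 + d ^ 2 + v) ≤
    2 * a * b - 2 * c * d - 2 * (a + b) * (c + d) + (q ^ 2 - v) + 2 * (a + b + c + d) * q := by
  subst hw
  nlinarith [sq_nonneg (c - d), sq_nonneg (a - (c+d)/5 + q/5), sq_nonneg ((c+d) + 2*q/3),
    sq_nonneg q]

private lemma ineqDc (a b c d q v : ℝ) (hq : q^2 ≤ 11*v) (hw : c = 0) :
    -5 * (a ^ 2 + b ^ 2 + c ^ 2 + d ^ 2 + v) ≤
    2 * a * b - 2 * c * d - 2 * (a + b) * (c + d) + (q ^ 2 - v) + 2 * (a + b + c + d) * q := by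
  subst hw
  nlinarith [sq_nonneg (a - b), sq_nonneg ((a+b) - d/3 + q/3), sq_nonneg (d + 2*q/7),
    sq_nonneg q]

private lemma ineqDd (a b c d q v : ℝ) (hq : q^2 ≤ 11*v) (hw : d = 0) :
    -5 * (a ^ 2 + b ^ 2 + c ^ 2 + d ^ 2 + v) ≤
    2 * a * b - 2 * c * d - 2 * (a + b) * (c + d) + (q ^ 2 - v) + 2 * (a + b + c + d) * q := by
  subst hw
  nlinarith [sq_nonneg (a - b), sq_nonneg ((a+b) - c/3 + q/3), sq_nonneg (c + 2*q/7),
    sq_nonneg q]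

private lemma ineqDiso (a b c d q v : ℝ) (hq : q^2 ≤ 10*v) :
    -5 * (a ^ 2 + b ^ 2 + c ^ 2 + d ^ 2 + v) ≤
    2 * a * b - 2 * c * d - 2 * (a + b) * (c + d) + (q ^ 2 - v) + 2 * (a + b + c + d) * q := by
  nlinarith [sq_nonneg (a - b), sq_nonneg (c - d), sq_nonneg ((a+b) - (c+d)/3 + q/3),
    sq_nonneg ((c+d) + 4*q/5)]

private lemma ineqBa0 (a0 a1 b0 b1 b2 q v : ℝ) (hq : q^2 ≤ 19*v) (hw : a0 = 0) :
    -5 * (a0 ^ 2 + a1 ^ 2 + (b0 ^ 2 + b1 ^ 2 + b2 ^ 2) + v) ≤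
    (a0 + a1) ^ 2 - (a0 ^ 2 + a1 ^ 2) + ((b0 + b1 + b2) ^ 2 - (b0 ^ 2 + b1 ^ 2 + b2 ^ 2)) -
          2 * (a0 + a1) * (b0 + b1 + b2) +
        (q ^ 2 - v) +
      2 * (a0 + a1 + (b0 + b1 + b2)) * q := by
  subst hw
  nlinarith [sq_nonneg (b0 - b1), sq_nonneg (b0 - b2), sq_nonneg (b1 - b2),
    sq_nonneg (a1 - (b0+b1+b2)/5 + q/5), sq_nonneg ((b0+b1+b2) + 9*q/8), sq_nonneg q]

private lemma ineqBa1 (a0 a1 b0 b1 b2 q v : ℝ) (hq : q^2 ≤ 19*v) (hw : a1 = 0) :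
    -5 * (a0 ^ 2 + a1 ^ 2 + (b0 ^ 2 + b1 ^ 2 + b2 ^ 2) + v) ≤
    (a0 + a1) ^ 2 - (a0 ^ 2 + a1 ^ 2) + ((b0 + b1 + b2) ^ 2 - (b0 ^ 2 + b1 ^ 2 + b2 ^ 2)) -
          2 * (a0 + a1) * (b0 + b1 + b2) +
        (q ^ 2 - v) +
      2 * (a0 + a1 + (b0 + b1 + b2)) * q := by
  subst hw
  nlinarith [sq_nonneg (b0 - b1), sq_nonneg (b0 - b2), sq_nonneg (b1 - b2),
    sq_nonneg (a0 - (b0+b1+b2)/5 + q/5), sq_nonneg ((b0+b1+b2) + 9*q/8), sq_nonneg q]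

private lemma ineqBb0 (a0 a1 b0 b1 b2 q v : ℝ) (hq : q^2 ≤ 19*v) (hw : b0 = 0) :
    -5 * (a0 ^ 2 + a1 ^ 2 + (b0 ^ 2 + b1 ^ 2 + b2 ^ 2) + v) ≤
    (a0 + a1) ^ 2 - (a0 ^ 2 + a1 ^ 2) + ((b0 + b1 + b2) ^ 2 - (b0 ^ 2 + b1 ^ 2 + b2 ^ 2)) -
          2 * (a0 + a1) * (b0 + b1 + b2) +
        (q ^ 2 - v) +
      2 * (a0 + a1 + (b0 + b1 + b2)) * q := by
  subst hw
  nlinarith [sq_nonneg (a0 - a1), sq_nonneg (b1 - b2),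
    sq_nonneg ((a0+a1) - (b1+b2)/3 + q/3), sq_nonneg ((b1+b2) + q/2), sq_nonneg q]

private lemma ineqBb1 (a0 a1 b0 b1 b2 q v : ℝ) (hq : q^2 ≤ 19*v) (hw : b1 = 0) :
    -5 * (a0 ^ 2 + a1 ^ 2 + (b0 ^ 2 + b1 ^ 2 + b2 ^ 2) + v) ≤
    (a0 + a1) ^ 2 - (a0 ^ 2 + a1 ^ 2) + ((b0 + b1 + b2) ^ 2 - (b0 ^ 2 + b1 ^ 2 + b2 ^ 2)) -
          2 * (a0 + a1) * (b0 + b1 + b2) +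
        (q ^ 2 - v) +
      2 * (a0 + a1 + (b0 + b1 + b2)) * q := by
  subst hw
  nlinarith [sq_nonneg (a0 - a1), sq_nonneg (b0 - b2),
    sq_nonneg ((a0+a1) - (b0+b2)/3 + q/3), sq_nonneg ((b0+b2) + q/2), sq_nonneg q]

private lemma ineqBb2 (a0 a1 b0 b1 b2 q v : ℝ) (hq : q^2 ≤ 19*v) (hw : b2 = 0) :
    -5 * (a0 ^ 2 + a1 ^ 2 + (b0 ^ 2 + b1 ^ 2 + b2 ^ 2) + v) ≤
    (a0 + a1) ^ 2 - (a0 ^ 2 + a1 ^ 2) + ((b0 + b1 + b2) ^ 2 - (b0 ^ 2 + b1 ^ 2 + b2 ^ 2)) -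
          2 * (a0 + a1) * (b0 + b1 + b2) +
        (q ^ 2 - v) +
      2 * (a0 + a1 + (b0 + b1 + b2)) * q := by
  subst hw
  nlinarith [sq_nonneg (a0 - a1), sq_nonneg (b0 - b1),
    sq_nonneg ((a0+a1) - (b0+b1)/3 + q/3), sq_nonneg ((b0+b1) + q/2), sq_nonneg q]

private lemma ineqBiso (a0 a1 b0 b1 b2 q v : ℝ) (hq : q^2 ≤ 18*v) :
    -5 * (a0 ^ 2 + a1 ^ 2 + (b0 ^ 2 + b1 ^ 2 + b2 ^ 2) + v) ≤
    (a0 + a1) ^ 2 - (a0 ^ 2 + a1 ^ 2) + ((b0 + b1 + b2) ^ 2 - (b0 ^ 2 + b1 ^ 2 + b2 ^ 2)) -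
          2 * (a0 + a1) * (b0 + b1 + b2) +
        (q ^ 2 - v) +
      2 * (a0 + a1 + (b0 + b1 + b2)) * q := by
  nlinarith [sq_nonneg (a0 - a1), sq_nonneg (b0 - b1), sq_nonneg (b0 - b2),
    sq_nonneg (b1 - b2), sq_nonneg ((a0+a1) - (b0+b1+b2)/3 + q/3),
    sq_nonneg ((b0+b1+b2) + 2*q/3)]

/-- `K₄(5)`, `K_{2,1,1}(11)` and `K_{2,3}(19)` all belong to `F_{-5}`. -/
theorem stmt_15 :
    MemF5 (SimpleGraph.completeGraph (Fin 4) ⊕g (⊥ : SimpleGraph (Fin 5))) ∧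
    MemF5 (diamondG ⊕g (⊥ : SimpleGraph (Fin 11))) ∧
    MemF5 (completeBipartiteGraph (Fin 2) (Fin 3) ⊕g (⊥ : SimpleGraph (Fin 19))) := by
  refine ⟨?_, ?_, ?_⟩
  · -- K₄(5)
    apply memF5_of_s15 (Sum.elim (fun _ => (5:ℝ)) (fun _ => (-2:ℝ)))
    · rw [quad_sum, quad_top, quad_bot]
      norm_num [dotProduct, Fintype.sum_sum_type, Function.comp, Finset.sum_const,
        Finset.card_univ]
    · rintro y ⟨w, hw⟩
      rw [quad_sum, quad_top, quad_bot]
      simp only [Function.comp]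
      rw [dotProduct]
      rw [Fintype.sum_sum_type]
      have hsq1 : ∑ a : Fin 4, y (Sum.inl a) * y (Sum.inl a)
          = ∑ a : Fin 4, (y (Sum.inl a))^2 := Finset.sum_congr rfl fun a _ => (sq _).symm
      have hsq2 : ∑ b : Fin 5, y (Sum.inr b) * y (Sum.inr b)
          = ∑ b : Fin 5, (y (Sum.inr b))^2 := Finset.sum_congr rfl fun b _ => (sq _).symm
      rw [hsq1, hsq2]
      set p := ∑ a : Fin 4, y (Sum.inl a) with hp
      set u := ∑ a : Fin 4, (y (Sum.inl a))^2 with hu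
      set q := ∑ b : Fin 5, y (Sum.inr b) with hq
      set v := ∑ b : Fin 5, (y (Sum.inr b))^2 with hv
      rcases w with i | i
      · have hcs : p^2 ≤ 3 * u := by
          have := cs_zero (fun a => y (Sum.inl a)) i hw
          norm_num at this
          exact this
        have hcs2 : q^2 ≤ 5 * v := by
          have := cs_all (fun b : Fin 5 => y (Sum.inr b))
          norm_num at this
          exact this
        nlinarith [sq_nonneg (p + q), sq_nonneg q]
      · have hcs : p^2 ≤ 4 * u := by
          have := cs_all (fun a : Fin 4 => y (Sum.inl a))
          norm_num at this
          exact this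
        have hcs2 : q^2 ≤ 4 * v := by
          have := cs_zero (fun b => y (Sum.inr b)) i hw
          norm_num at this
          exact this
        nlinarith [sq_nonneg (p + 2*q)]
  · -- diamond(11)
    apply memF5_of_s15 (Sum.elim ![(-13:ℝ), -13, -17, -17] (fun _ => (4:ℝ)))
    · rw [quad_sum, quad_diamond, quad_bot]
      norm_num [dotProduct, Fintype.sum_sum_type, Function.comp, Finset.sum_const,
        Finset.card_univ, Fin.sum_univ_four, Matrix.cons_val_two, Matrix.cons_val_three]
    · rintro y ⟨w, hw⟩
      rw [quad_sum, quad_diamond, quad_bot]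
      simp only [Function.comp]
      rw [dotProduct, Fintype.sum_sum_type]
      have hsq1 : ∑ a : Fin 4, y (Sum.inl a) * y (Sum.inl a)
          = ∑ a : Fin 4, (y (Sum.inl a))^2 := Finset.sum_congr rfl fun a _ => (sq _).symm
      have hsq2 : ∑ b : Fin 11, y (Sum.inr b) * y (Sum.inr b)
          = ∑ b : Fin 11, (y (Sum.inr b))^2 := Finset.sum_congr rfl fun b _ => (sq _).symm
      rw [hsq1, hsq2, Fin.sum_univ_four, Fin.sum_univ_four]
      set a := y (Sum.inl 0) with ha
      set b := y (Sum.inl 1) with hb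
      set c := y (Sum.inl 2) with hc
      set d := y (Sum.inl 3) with hd
      set q := ∑ j : Fin 11, y (Sum.inr j) with hq
      set v := ∑ j : Fin 11, (y (Sum.inr j))^2 with hv
      rcases w with i | i
      · have hcs2 : q^2 ≤ 11 * v := by
          have := cs_all (fun j : Fin 11 => y (Sum.inr j))
          norm_num at this
          exact this
        fin_cases i
        · exact ineqDa a b c d q v hcs2 hw
        · exact ineqDb a b c d q v hcs2 hw
        · exact ineqDc a b c d q v hcs2 hw
        · exact ineqDd a b c d q v hcs2 hw
      · have hcs2 : q^2 ≤ 10 * v := by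
          have := cs_zero (fun j => y (Sum.inr j)) i hw
          norm_num at this
          exact this
        exact ineqDiso a b c d q v hcs2
  · -- K_{2,3}(19)
    apply memF5_of_s15
      (Sum.elim (Sum.elim (fun _ => (-95:ℝ)) (fun _ => (-76:ℝ))) (fun _ => (18:ℝ)))
    · rw [quad_sum, quad_bip, quad_bot]
      norm_num [dotProduct, Fintype.sum_sum_type, Function.comp, Finset.sum_const,
        Finset.card_univ]
    · rintro y ⟨w, hw⟩
      rw [quad_sum, quad_bip, quad_bot]
      simp only [Function.comp]
      rw [dotProduct, Fintype.sum_sum_type, Fintype.sum_sum_type]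
      have hsq1 : ∑ a : Fin 2, y (Sum.inl (Sum.inl a)) * y (Sum.inl (Sum.inl a))
          = ∑ a : Fin 2, (y (Sum.inl (Sum.inl a)))^2 :=
        Finset.sum_congr rfl fun a _ => (sq _).symm
      have hsq2 : ∑ b : Fin 3, y (Sum.inl (Sum.inr b)) * y (Sum.inl (Sum.inr b))
          = ∑ b : Fin 3, (y (Sum.inl (Sum.inr b)))^2 :=
        Finset.sum_congr rfl fun b _ => (sq _).symm
      have hsq3 : ∑ b : Fin 19, y (Sum.inr b) * y (Sum.inr b)
          = ∑ b : Fin 19, (y (Sum.inr b))^2 := Finset.sum_congr rfl fun b _ => (sq _).symm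
      rw [hsq1, hsq2, hsq3]
      rw [show (∑ i : Fin 2 ⊕ Fin 3, y (Sum.inl i))
          = (∑ a : Fin 2, y (Sum.inl (Sum.inl a))) + ∑ b : Fin 3, y (Sum.inl (Sum.inr b))
          from Fintype.sum_sum_type _]
      rw [Fin.sum_univ_two, Fin.sum_univ_two, Fin.sum_univ_three, Fin.sum_univ_three]
      set a0 := y (Sum.inl (Sum.inl 0)) with ha0
      set a1 := y (Sum.inl (Sum.inl 1)) with ha1
      set b0 := y (Sum.inl (Sum.inr 0)) with hb0
      set b1 := y (Sum.inl (Sum.inr 1)) with hb1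
      set b2 := y (Sum.inl (Sum.inr 2)) with hb2
      set q := ∑ j : Fin 19, y (Sum.inr j) with hq
      set v := ∑ j : Fin 19, (y (Sum.inr j))^2 with hv
      rcases w with (i | i) | i
      · have hcs2 : q^2 ≤ 19 * v := by
          have := cs_all (fun j : Fin 19 => y (Sum.inr j))
          norm_num at this
          exact this
        fin_cases i
        · exact ineqBa0 a0 a1 b0 b1 b2 q v hcs2 hw
        · exact ineqBa1 a0 a1 b0 b1 b2 q v hcs2 hw
      · have hcs2 : q^2 ≤ 19 * v := by
          have := cs_all (fun j : Fin 19 => y (Sum.inr j))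
          norm_num at this
          exact this
        fin_cases i
        · exact ineqBb0 a0 a1 b0 b1 b2 q v hcs2 hw
        · exact ineqBb1 a0 a1 b0 b1 b2 q v hcs2 hw
        · exact ineqBb2 a0 a1 b0 b1 b2 q v hcs2 hw
      · have hcs2 : q^2 ≤ 18 * v := by
          have := cs_zero (fun j => y (Sum.inr j)) i hw
          norm_num at this
          exact this
        exact ineqBiso a0 a1 b0 b1 b2 q v hcs2
end
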